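/- arXiv:1809.10272 — 5 statements merged into one kernel-verified Lean document; each statement's English description precedes it below -/
import Mathlib

section
/- For any finite-valued random variables X₁, …, Xₙ on a common probability space, DTC(X₁;…;Xₙ) = ∑_{i=1}^n I(Xᵢ ; X_{[n]∖i} | X_{[i-1]}), where X_{[i-1]} = (X₁,…,X_{i-1}) (the i = 1 term being the unconditional mutual information I(X₁ ; X_{[n]∖1})). -/
/-!
Since `X_{<i}` is a function of `X_{≠i}`, the `i`-th summand is
`H(Xᵢ | X_{<i}) - H(Xᵢ | X_{≠i})`. Summed over `i`, the first terms give `H(X)` by the chain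
rule, telescoping the entropies of the initial segments `X_{<m}`, and the second terms are
exactly those subtracted from `H(X)` in `DTC`.
-/
open MeasureTheory Real

namespace Corr

variable {Ω : Type*} [MeasurableSpace Ω]

/-- Shannon entropy of a finite-valued random variable. -/
noncomputable def shEnt {K : Type*} [Fintype K] (μ : Measure Ω) (X : Ω → K) : ℝ :=
  ∑ k : K, Real.negMulLog ((μ (X ⁻¹' {k})).toReal)

/-- Conditional Shannon entropy `H(X | Y)`. -/
noncomputable def condEnt {K L : Type*} [Fintype K] [Fintype L]
    (μ : Measure Ω) (X : Ω → K) (Y : Ω → L) : ℝ :=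
  shEnt μ (fun ω => (X ω, Y ω)) - shEnt μ Y

/-- Mutual information `I(X ; Y)`. -/
noncomputable def mutInfo {K L : Type*} [Fintype K] [Fintype L]
    (μ : Measure Ω) (X : Ω → K) (Y : Ω → L) : ℝ :=
  shEnt μ X + shEnt μ Y - shEnt μ (fun ω => (X ω, Y ω))

/-- Conditional mutual information `I(X ; Y | Z)`. -/
noncomputable def condMutInfo {K L M : Type*} [Fintype K] [Fintype L] [Fintype M]
    (μ : Measure Ω) (X : Ω → K) (Y : Ω → L) (Z : Ω → M) : ℝ :=
  condEnt μ X Z + condEnt μ Y Z - condEnt μ (fun ω => (X ω, Y ω)) Z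

/-- The joint random variable of a family of random variables. -/
def joint {ι : Type*} {K : ι → Type*} (X : ∀ i, Ω → K i) : Ω → ∀ i, K i :=
  fun ω i => X i ω

/-- Total correlation `TC(X₁;…;Xₙ)`. -/
noncomputable def TC {ι : Type*} [Fintype ι] [DecidableEq ι] {K : ι → Type*}
    [∀ i, Fintype (K i)] (μ : Measure Ω) (X : ∀ i, Ω → K i) : ℝ :=
  (∑ i, shEnt μ (X i)) - shEnt μ (joint X)

/-- Dual total correlation `DTC(X₁;…;Xₙ)`. -/
noncomputable def DTC {ι : Type*} [Fintype ι] [DecidableEq ι] {K : ι → Type*}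
    [∀ i, Fintype (K i)] (μ : Measure Ω) (X : ∀ i, Ω → K i) : ℝ :=
  shEnt μ (joint X) - ∑ i, condEnt μ (X i) (joint fun j : {j : ι // j ≠ i} => X j.1)

/-- Conditional total correlation `TC(X₁;…;Xₙ | Y)`. -/
noncomputable def condTC {ι : Type*} [Fintype ι] [DecidableEq ι] {K : ι → Type*}
    [∀ i, Fintype (K i)] {L : Type*} [Fintype L]
    (μ : Measure Ω) (X : ∀ i, Ω → K i) (Y : Ω → L) : ℝ :=
  (∑ i, condEnt μ (X i) Y) - condEnt μ (joint X) Y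

/-- Conditional dual total correlation `DTC(X₁;…;Xₙ | Y)`. -/
noncomputable def condDTC {ι : Type*} [Fintype ι] [DecidableEq ι] {K : ι → Type*}
    [∀ i, Fintype (K i)] {L : Type*} [Fintype L]
    (μ : Measure Ω) (X : ∀ i, Ω → K i) (Y : Ω → L) : ℝ :=
  condEnt μ (joint X) Y -
    ∑ i, condEnt μ (X i)
      (fun ω => (joint (fun j : {j : ι // j ≠ i} => X j.1) ω, Y ω))

section Entropy

variable {K L M : Type*} [Fintype K] [Fintype L] [Fintype M]

lemma shEnt_comp_of_injective (μ : Measure Ω) (X : Ω → K) {e : K → L}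
    (he : Function.Injective e) : shEnt μ (fun ω => e (X ω)) = shEnt μ X := by
  classical
  have hfiber (k : K) : (fun ω => e (X ω)) ⁻¹' {e k} = X ⁻¹' {k} := by
    ext ω; simp [he.eq_iff]
  have houtside (l : L) (hl : l ∉ Finset.univ.image e) :
      (fun ω => e (X ω)) ⁻¹' {l} = ∅ := by
    ext ω
    simp only [Set.mem_preimage, Set.mem_singleton_iff, Set.mem_empty_iff_false, iff_false]
    exact fun h => hl (Finset.mem_image.mpr ⟨X ω, Finset.mem_univ _, h⟩)
  unfold shEnt
  calc ∑ l : L, negMulLog (μ ((fun ω => e (X ω)) ⁻¹' {l})).toReal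
      = ∑ l ∈ Finset.univ.image e, negMulLog (μ ((fun ω => e (X ω)) ⁻¹' {l})).toReal :=
        (Finset.sum_subset (Finset.subset_univ _) fun l _ hl => by simp [houtside l hl]).symm
    _ = ∑ k : K, negMulLog (μ (X ⁻¹' {k})).toReal := by
        rw [Finset.sum_image fun a _ b _ h => he h]
        simp only [hfiber]

lemma shEnt_of_subsingleton [Subsingleton K] (μ : Measure Ω) [IsProbabilityMeasure μ]
    (X : Ω → K) : shEnt μ X = 0 := by
  refine Finset.sum_eq_zero fun k _ => ?_
  have hfiber : X ⁻¹' {k} = Set.univ := Set.eq_univ_of_forall fun ω => Subsingleton.elim _ _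
  simp [hfiber]

lemma shEnt_prod_comp_self (μ : Measure Ω) (Y : Ω → L) (f : L → M) :
    shEnt μ (fun ω => (Y ω, f (Y ω))) = shEnt μ Y :=
  shEnt_comp_of_injective μ Y (e := fun y => (y, f y)) fun _ _ h => congrArg Prod.fst h

lemma condMutInfo_of_comp (μ : Measure Ω) (X : Ω → K) (Y : Ω → L) (f : L → M) :
    condMutInfo μ X Y (fun ω => f (Y ω)) =
      condEnt μ X (fun ω => f (Y ω)) - condEnt μ X Y := by
  have hY := shEnt_prod_comp_self μ Y f
  have hXY : shEnt μ (fun ω => ((X ω, Y ω), f (Y ω))) = shEnt μ (fun ω => (X ω, Y ω)) :=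
    shEnt_prod_comp_self μ (fun ω => (X ω, Y ω)) fun p => f p.2
  simp only [condMutInfo, condEnt, hY, hXY]
  ring

end Entropy

section ChainRule

variable {n : ℕ} {K : Fin n → Type*} [∀ i, Fintype (K i)]

lemma condEnt_joint_lt_eq_sub (μ : Measure Ω) (X : ∀ i, Ω → K i) (i : Fin n) :
    condEnt μ (X i) (joint fun j : {j : Fin n // j < i} => X j.1) =
      shEnt μ (joint fun j : {j : Fin n // (j : ℕ) < i + 1} => X j.1) -
        shEnt μ (joint fun j : {j : Fin n // (j : ℕ) < i} => X j.1) := by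
  have hsplit : Function.Injective fun x : ∀ j : {j : Fin n // (j : ℕ) < i + 1}, K j.1 =>
      (x ⟨i, Nat.lt_succ_self _⟩,
        fun j : {j : Fin n // j < i} => x ⟨j.1, Nat.lt_succ_of_lt j.2⟩) := by
    intro x y hxy
    funext j
    rcases Nat.lt_succ_iff_lt_or_eq.mp j.2 with hlt | heq
    · exact congrFun (congrArg Prod.snd hxy) ⟨j.1, hlt⟩
    · obtain rfl : j = ⟨i, Nat.lt_succ_self _⟩ := Subtype.ext (Fin.ext heq)
      exact congrArg Prod.fst hxy
  unfold condEnt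
  rw [← shEnt_comp_of_injective μ _ hsplit]
  rfl

lemma shEnt_joint_eq_sum_condEnt (μ : Measure Ω) [IsProbabilityMeasure μ]
    (X : ∀ i, Ω → K i) :
    shEnt μ (joint X) =
      ∑ i : Fin n, condEnt μ (X i) (joint fun j : {j : Fin n // j < i} => X j.1) := by
  set g : ℕ → ℝ := fun m => shEnt μ (joint fun j : {j : Fin n // (j : ℕ) < m} => X j.1)
  have hg0 : g 0 = 0 :=
    haveI : IsEmpty {j : Fin n // (j : ℕ) < 0} := ⟨fun j => Nat.not_lt_zero _ j.2⟩
    shEnt_of_subsingleton μ _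
  have hgn : g n = shEnt μ (joint X) :=
    shEnt_comp_of_injective μ (joint X) (e := fun x (j : {j : Fin n // (j : ℕ) < n}) => x j.1)
      fun x y hxy => funext fun j => congrFun hxy ⟨j, j.2⟩
  simp only [condEnt_joint_lt_eq_sub μ X]
  rw [Fin.sum_univ_eq_sum_range (fun m => g (m + 1) - g m) n, Finset.sum_range_sub, hg0, hgn,
    sub_zero]

end ChainRule

theorem dtc_eq_sum_condMutInfo_general (μ : Measure Ω) [IsProbabilityMeasure μ]
    {n : ℕ} {K : Fin n → Type*} [∀ i, Fintype (K i)]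
    (X : ∀ i, Ω → K i) :
    DTC μ X = ∑ i : Fin n,
      condMutInfo μ (X i) (joint fun j : {j : Fin n // j ≠ i} => X j.1)
        (joint fun j : {j : Fin n // j < i} => X j.1) := by
  have hterm (i : Fin n) :
      condMutInfo μ (X i) (joint fun j : {j : Fin n // j ≠ i} => X j.1)
          (joint fun j : {j : Fin n // j < i} => X j.1) =
        condEnt μ (X i) (joint fun j : {j : Fin n // j < i} => X j.1) -
          condEnt μ (X i) (joint fun j : {j : Fin n // j ≠ i} => X j.1) :=
    condMutInfo_of_comp μ (X i) _
      fun (x : ∀ j : {j : Fin n // j ≠ i}, K j.1) (j : {j : Fin n // j < i}) =>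
        x ⟨j.1, Fin.ne_of_lt j.2⟩
  rw [Finset.sum_congr rfl fun i _ => hterm i, Finset.sum_sub_distrib,
    ← shEnt_joint_eq_sum_condEnt μ X]
  rfl

/-- For finite-valued random variables `X₁, …, Xₙ`,
`DTC(X₁;…;Xₙ) = ∑_{i=1}^n I(Xᵢ ; X_{[n]∖i} | X_{[i-1]})`. -/
theorem dtc_eq_sum_condMutInfo (μ : Measure Ω) [IsProbabilityMeasure μ]
    {n : ℕ} {K : Fin n → Type*} [∀ i, Fintype (K i)]
    [∀ i, MeasurableSpace (K i)] [∀ i, MeasurableSingletonClass (K i)]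
    (X : ∀ i, Ω → K i) (hX : ∀ i, Measurable (X i)) :
    DTC μ X = ∑ i : Fin n,
      condMutInfo μ (X i) (joint fun j : {j : Fin n // j ≠ i} => X j.1)
        (joint fun j : {j : Fin n // j < i} => X j.1) :=
  dtc_eq_sum_condMutInfo_general μ X

end Corr
end

section
/- For any finite-valued random variables X₁, …, Xₙ and Y₁, …, Yₙ on a common probability space, DTC(Y₁;…;Yₙ) ≤ DTC(X₁;…;Xₙ) + (n−1)·∑_{i=1}^n H(Yᵢ | Xᵢ). In particular, if Xᵢ almost surely determines Yᵢ for each i (i.e., H(Yᵢ | Xᵢ) = 0 for all i), then DTC(Y₁;…;Yₙ) ≤ DTC(X₁;…;Xₙ). -/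
open MeasureTheory Real

namespace Corr

variable {Ω : Type*} [MeasurableSpace Ω]

/-- `A` pointwise determines `B`. -/
def Det {K M : Type*} (A : Ω → K) (B : Ω → M) : Prop := ∃ f : K → M, ∀ ω, f (A ω) = B ω

lemma Det.pair {K K' M M' : Type*} {A : Ω → K} {A' : Ω → K'} {B : Ω → M} {B' : Ω → M'}
    (h1 : Det A A') (h2 : Det B B') :
    Det (fun ω => (A ω, B ω)) (fun ω => (A' ω, B' ω)) := by
  obtain ⟨f, hf⟩ := h1; obtain ⟨g, hg⟩ := h2
  exact ⟨Prod.map f g, fun ω => by simp [Prod.map, hf ω, hg ω]⟩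

lemma Det.refl {K : Type*} (A : Ω → K) : Det A A := ⟨id, fun _ => rfl⟩

lemma shEnt_comp_inj {K M : Type*} [Fintype K] [Fintype M] (μ : Measure Ω)
    (X : Ω → K) (f : K → M) (hf : Function.Injective f) :
    shEnt μ (fun ω => f (X ω)) = shEnt μ X := by
  classical
  unfold shEnt
  have h1 : ∀ k : K, ((fun ω => f (X ω)) ⁻¹' {f k}) = X ⁻¹' {k} := by
    intro k; ext ω; simp [hf.eq_iff]
  have himg := Finset.sum_image
      (f := fun m => Real.negMulLog ((μ ((fun ω => f (X ω)) ⁻¹' {m})).toReal))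
      (g := f) (s := Finset.univ) (fun x _ y _ h => hf h)
  calc ∑ m : M, Real.negMulLog ((μ ((fun ω => f (X ω)) ⁻¹' {m})).toReal)
      = ∑ m ∈ Finset.univ.image f, Real.negMulLog ((μ ((fun ω => f (X ω)) ⁻¹' {m})).toReal) := by
        refine (Finset.sum_subset (Finset.subset_univ _) ?_).symm
        intro m _ hm
        have : ((fun ω => f (X ω)) ⁻¹' {m}) = ∅ := by
          ext ω
          simp only [Set.mem_preimage, Set.mem_singleton_iff, Set.mem_empty_iff_false, iff_false]
          intro h; exact hm (Finset.mem_image.2 ⟨X ω, Finset.mem_univ _, h⟩)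
        simp [this]
    _ = ∑ k : K, Real.negMulLog ((μ ((fun ω => f (X ω)) ⁻¹' {f k})).toReal) := himg
    _ = ∑ k : K, Real.negMulLog ((μ (X ⁻¹' {k})).toReal) := by
        refine Finset.sum_congr rfl fun k _ => ?_
        rw [h1]

lemma shEnt_eq_of_det {K M : Type*} [Fintype K] [Fintype M] (μ : Measure Ω)
    {A : Ω → K} {B : Ω → M} (h1 : Det A B) (h2 : Det B A) :
    shEnt μ A = shEnt μ B := by
  obtain ⟨f, hf⟩ := h1; obtain ⟨g, hg⟩ := h2
  have e1 : shEnt μ (fun ω => (A ω, B ω)) = shEnt μ A := by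
    have he : (fun ω => (A ω, B ω)) = fun ω => ((fun k => (k, f k)) (A ω)) := by
      funext ω; simp [hf ω]
    rw [he]
    refine shEnt_comp_inj μ A (fun k => (k, f k)) ?_
    intro x y h
    simpa using congrArg Prod.fst h
  have e2 : shEnt μ (fun ω => (A ω, B ω)) = shEnt μ B := by
    have he : (fun ω => (A ω, B ω)) = fun ω => ((fun m => (g m, m)) (B ω)) := by
      funext ω; simp [hg ω]
    rw [he]
    refine shEnt_comp_inj μ B (fun m => (g m, m)) ?_
    intro x y h
    simpa using congrArg Prod.snd h
  rw [← e1, e2]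

lemma condEnt_congr {K K' M M' : Type*} [Fintype K] [Fintype K'] [Fintype M] [Fintype M']
    (μ : Measure Ω) {A : Ω → K} {A' : Ω → K'} {B : Ω → M} {B' : Ω → M'}
    (h1 : Det A A') (h1' : Det A' A) (h2 : Det B B') (h2' : Det B' B) :
    condEnt μ A B = condEnt μ A' B' := by
  unfold condEnt
  rw [shEnt_eq_of_det μ h2 h2', shEnt_eq_of_det μ (h1.pair h2) (h1'.pair h2')]

lemma shEnt_subsingleton {M : Type*} [Fintype M] [Subsingleton M]
    (μ : Measure Ω) [IsProbabilityMeasure μ] (Z : Ω → M) : shEnt μ Z = 0 := by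
  unfold shEnt
  rcases isEmpty_or_nonempty M with h | h
  · simp
  · obtain ⟨m⟩ := h
    have huniv : (Finset.univ : Finset M) = {m} := by
      apply Finset.eq_singleton_iff_unique_mem.2
      exact ⟨Finset.mem_univ _, fun x _ => Subsingleton.elim _ _⟩
    rw [huniv, Finset.sum_singleton]
    have : Z ⁻¹' {m} = Set.univ := by
      ext ω; simp [Subsingleton.elim (Z ω) m]
    simp [this]

lemma negMulLog_sum_le {ι : Type*} (s : Finset ι) (p : ι → ℝ) (hp : ∀ i ∈ s, 0 ≤ p i) :
    Real.negMulLog (∑ i ∈ s, p i) ≤ ∑ i ∈ s, Real.negMulLog (p i) := by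
  have hs : ∀ i ∈ s, p i ≤ ∑ j ∈ s, p j := fun i hi =>
    Finset.single_le_sum hp hi
  rw [Real.negMulLog, neg_mul, Finset.sum_mul]
  rw [← Finset.sum_neg_distrib]
  refine Finset.sum_le_sum fun i hi => ?_
  rcases eq_or_lt_of_le (hp i hi) with h0 | h0
  · simp [Real.negMulLog, ← h0]
  · have hlog : Real.log (p i) ≤ Real.log (∑ j ∈ s, p j) :=
      Real.log_le_log h0 (hs i hi)
    rw [Real.negMulLog, neg_mul]
    nlinarith [hp i hi]

lemma toReal_measure_eq_sum {K L : Type*} [Fintype K] [Fintype L]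
    [MeasurableSpace K] [MeasurableSingletonClass K]
    [MeasurableSpace L] [MeasurableSingletonClass L]
    (μ : Measure Ω) [IsFiniteMeasure μ] {S : Ω → K} {T : Ω → L}
    (hS : Measurable S) (hT : Measurable T) (l : L) :
    (μ (T ⁻¹' {l})).toReal = ∑ k : K, (μ ((fun ω => (S ω, T ω)) ⁻¹' {(k, l)})).toReal := by
  classical
  have hset : T ⁻¹' {l} = ⋃ k ∈ (Finset.univ : Finset K), (fun ω => (S ω, T ω)) ⁻¹' {(k, l)} := by
    ext ω
    simp [Prod.ext_iff]
  rw [hset, measure_biUnion_finset]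
  · exact ENNReal.toReal_sum (fun a _ => measure_ne_top μ _)
  · intro a _ b _ hab
    simp only [Function.onFun]
    apply Set.disjoint_left.mpr
    intro ω h1 h2
    apply hab
    simp only [Set.mem_preimage, Set.mem_singleton_iff, Prod.ext_iff] at h1 h2
    rw [← h1.1, h2.1]
  · intro k _
    exact (hS.prodMk hT) (measurableSet_singleton _)

lemma condEnt_nonneg {K L : Type*} [Fintype K] [Fintype L]
    [MeasurableSpace K] [MeasurableSingletonClass K]
    [MeasurableSpace L] [MeasurableSingletonClass L]
    (μ : Measure Ω) [IsProbabilityMeasure μ] {S : Ω → K} {T : Ω → L}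
    (hS : Measurable S) (hT : Measurable T) :
    0 ≤ condEnt μ S T := by
  unfold condEnt
  rw [sub_nonneg]
  unfold shEnt
  calc ∑ l : L, Real.negMulLog ((μ (T ⁻¹' {l})).toReal)
      = ∑ l : L, Real.negMulLog (∑ k : K, (μ ((fun ω => (S ω, T ω)) ⁻¹' {(k, l)})).toReal) := by
        refine Finset.sum_congr rfl fun l _ => ?_
        rw [toReal_measure_eq_sum μ hS hT l]
    _ ≤ ∑ l : L, ∑ k : K, Real.negMulLog ((μ ((fun ω => (S ω, T ω)) ⁻¹' {(k, l)})).toReal) := by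
        refine Finset.sum_le_sum fun l _ => ?_
        exact negMulLog_sum_le _ _ (fun k _ => ENNReal.toReal_nonneg)
    _ = ∑ p : K × L, Real.negMulLog ((μ ((fun ω => (S ω, T ω)) ⁻¹' {p})).toReal) := by
        rw [Fintype.sum_prod_type_right]

lemma gibbs_term {x u v w : ℝ} (hx : 0 ≤ x) (hxu : x ≤ u) (hxv : x ≤ v) (huw : u ≤ w) :
    x - u * v / w ≤
      -(x * Real.log u) - x * Real.log v + x * Real.log x + x * Real.log w := by
  rcases eq_or_lt_of_le hx with h0 | h0
  · have hu : 0 ≤ u := le_trans hx hxu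
    have hv : 0 ≤ v := le_trans hx hxv
    have hw : 0 ≤ w := le_trans hu huw
    have : 0 ≤ u * v / w := div_nonneg (mul_nonneg hu hv) hw
    simp [← h0]
    linarith
  · have hu : 0 < u := lt_of_lt_of_le h0 hxu
    have hv : 0 < v := lt_of_lt_of_le h0 hxv
    have hw : 0 < w := lt_of_lt_of_le hu huw
    have hq : 0 < u * v / w := div_pos (mul_pos hu hv) hw
    have hlog : Real.log ((u * v / w) / x) ≤ (u * v / w) / x - 1 :=
      Real.log_le_sub_one_of_pos (div_pos hq h0)
    rw [Real.log_div hq.ne' h0.ne', Real.log_div (mul_pos hu hv).ne' hw.ne',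
      Real.log_mul hu.ne' hv.ne'] at hlog
    have hmul := mul_le_mul_of_nonneg_left hlog hx
    have hcancel : x * ((u * v / w) / x) = u * v / w := by
      rw [mul_comm, div_mul_cancel₀ _ h0.ne']
    nlinarith [hmul, hcancel]

lemma cmi_core {A B C : Type*} [Fintype A] [Fintype B] [Fintype C]
    (r : A → B → C → ℝ) (hr : ∀ a b c, 0 ≤ r a b c) :
    (∑ a : A, ∑ b : B, ∑ c : C, Real.negMulLog (r a b c)) +
        ∑ c : C, Real.negMulLog (∑ a : A, ∑ b : B, r a b c) ≤
      (∑ a : A, ∑ c : C, Real.negMulLog (∑ b : B, r a b c)) +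
        ∑ b : B, ∑ c : C, Real.negMulLog (∑ a : A, r a b c) := by
  classical
  have swap3 : ∀ f : A → B → C → ℝ,
      ∑ a : A, ∑ b : B, ∑ c : C, f a b c = ∑ c : C, ∑ a : A, ∑ b : B, f a b c := by
    intro f
    have h1 : ∀ a : A, ∑ b : B, ∑ c : C, f a b c = ∑ c : C, ∑ b : B, f a b c :=
      fun a => Finset.sum_comm
    simp_rw [h1]
    exact Finset.sum_comm
  set pAC : A → C → ℝ := fun a c => ∑ b : B, r a b c with hpAC
  set pBC : B → C → ℝ := fun b c => ∑ a : A, r a b c with hpBC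
  set pC : C → ℝ := fun c => ∑ a : A, ∑ b : B, r a b c with hpC
  set q : A → B → C → ℝ := fun a b c => pAC a c * pBC b c / pC c with hq
  -- rewrite the four entropy-like terms as triple sums
  have hAC : (∑ a : A, ∑ c : C, Real.negMulLog (pAC a c)) =
      ∑ a : A, ∑ b : B, ∑ c : C, -(r a b c * Real.log (pAC a c)) := by
    refine Finset.sum_congr rfl fun a _ => ?_
    rw [Finset.sum_comm]
    refine Finset.sum_congr rfl fun c _ => ?_
    rw [Real.negMulLog, neg_mul, hpAC]
    rw [Finset.sum_mul, ← Finset.sum_neg_distrib]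
  have hBC : (∑ b : B, ∑ c : C, Real.negMulLog (pBC b c)) =
      ∑ a : A, ∑ b : B, ∑ c : C, -(r a b c * Real.log (pBC b c)) := by
    have h1 : ∀ b c, Real.negMulLog (pBC b c) = ∑ a : A, -(r a b c * Real.log (pBC b c)) := by
      intro b c
      rw [Real.negMulLog, neg_mul, hpBC]
      rw [Finset.sum_mul, ← Finset.sum_neg_distrib]
    simp_rw [h1]
    rw [swap3 (fun a b c => -(r a b c * Real.log (pBC b c)))]
    refine Finset.sum_comm.trans ?_
    refine Finset.sum_congr rfl fun c _ => Finset.sum_comm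
  have hC : (∑ c : C, Real.negMulLog (pC c)) =
      ∑ a : A, ∑ b : B, ∑ c : C, -(r a b c * Real.log (pC c)) := by
    have h1 : ∀ c, Real.negMulLog (pC c) = ∑ a : A, ∑ b : B, -(r a b c * Real.log (pC c)) := by
      intro c
      rw [Real.negMulLog, neg_mul, hpC]
      rw [Finset.sum_mul, ← Finset.sum_neg_distrib]
      refine Finset.sum_congr rfl fun a _ => ?_
      rw [Finset.sum_mul, ← Finset.sum_neg_distrib]
    simp_rw [h1]
    exact (swap3 (fun a b c => -(r a b c * Real.log (pC c)))).symm
  have hABC : (∑ a : A, ∑ b : B, ∑ c : C, Real.negMulLog (r a b c)) =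
      ∑ a : A, ∑ b : B, ∑ c : C, -(r a b c * Real.log (r a b c)) := by
    refine Finset.sum_congr rfl fun a _ => Finset.sum_congr rfl fun b _ =>
      Finset.sum_congr rfl fun c _ => ?_
    rw [Real.negMulLog, neg_mul]
  rw [hAC, hBC, hC, hABC, ← sub_nonneg]
  have hcomb : (∑ a : A, ∑ b : B, ∑ c : C, -(r a b c * Real.log (pAC a c))) +
        (∑ a : A, ∑ b : B, ∑ c : C, -(r a b c * Real.log (pBC b c))) -
        ((∑ a : A, ∑ b : B, ∑ c : C, -(r a b c * Real.log (r a b c))) +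
          ∑ a : A, ∑ b : B, ∑ c : C, -(r a b c * Real.log (pC c))) =
      ∑ a : A, ∑ b : B, ∑ c : C,
        (-(r a b c * Real.log (pAC a c)) - r a b c * Real.log (pBC b c) +
          r a b c * Real.log (r a b c) + r a b c * Real.log (pC c)) := by
    simp only [← Finset.sum_add_distrib, ← Finset.sum_sub_distrib]
    refine Finset.sum_congr rfl fun a _ => Finset.sum_congr rfl fun b _ =>
      Finset.sum_congr rfl fun c _ => ?_
    ring
  rw [hcomb]
  have hterm : ∀ a b c, r a b c - q a b c ≤
      -(r a b c * Real.log (pAC a c)) - r a b c * Real.log (pBC b c) +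
        r a b c * Real.log (r a b c) + r a b c * Real.log (pC c) := by
    intro a b c
    refine gibbs_term (hr a b c) ?_ ?_ ?_
    · exact Finset.single_le_sum (fun b' _ => hr a b' c) (Finset.mem_univ b)
    · exact Finset.single_le_sum (fun a' _ => hr a' b c) (Finset.mem_univ a)
    · exact Finset.single_le_sum (f := fun a' => pAC a' c)
        (fun a' _ => Finset.sum_nonneg fun b' _ => hr a' b' c) (Finset.mem_univ a)
  have hqsum : ∑ a : A, ∑ b : B, ∑ c : C, q a b c ≤ ∑ a : A, ∑ b : B, ∑ c : C, r a b c := by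
    rw [swap3 q, swap3 r]
    refine Finset.sum_le_sum fun c _ => ?_
    have hql : ∑ a : A, ∑ b : B, q a b c = (∑ a : A, pAC a c) * (∑ b : B, pBC b c) / pC c := by
      rw [Finset.sum_mul]
      rw [Finset.sum_div]
      refine Finset.sum_congr rfl fun a _ => ?_
      rw [Finset.mul_sum, Finset.sum_div]
    have hpa : ∑ a : A, pAC a c = pC c := rfl
    have hpb : ∑ b : B, pBC b c = pC c := Finset.sum_comm
    rw [hql, hpa, hpb]
    rcases eq_or_ne (pC c) 0 with h0 | h0
    · rw [h0]
      simp
    · rw [mul_div_assoc, div_self h0, mul_one]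
  calc (0 : ℝ) ≤ (∑ a : A, ∑ b : B, ∑ c : C, r a b c) -
        ∑ a : A, ∑ b : B, ∑ c : C, q a b c := by linarith
    _ = ∑ a : A, ∑ b : B, ∑ c : C, (r a b c - q a b c) := by
        rw [← Finset.sum_sub_distrib]
        refine Finset.sum_congr rfl fun a _ => ?_
        rw [← Finset.sum_sub_distrib]
        refine Finset.sum_congr rfl fun b _ => ?_
        rw [← Finset.sum_sub_distrib]
    _ ≤ _ := by
        refine Finset.sum_le_sum fun a _ => Finset.sum_le_sum fun b _ =>
          Finset.sum_le_sum fun c _ => hterm a b c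

lemma condMutInfo_nonneg {K L M : Type*} [Fintype K] [Fintype L] [Fintype M]
    [MeasurableSpace K] [MeasurableSingletonClass K]
    [MeasurableSpace L] [MeasurableSingletonClass L]
    [MeasurableSpace M] [MeasurableSingletonClass M]
    (μ : Measure Ω) [IsProbabilityMeasure μ] {A : Ω → K} {B : Ω → L} {C : Ω → M}
    (hA : Measurable A) (hB : Measurable B) (hC : Measurable C) :
    0 ≤ condMutInfo μ A B C := by
  classical
  set r : K → L → M → ℝ :=
    fun a b c => (μ ((fun ω => ((A ω, B ω), C ω)) ⁻¹' {((a, b), c)})).toReal with hr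
  have hrnn : ∀ a b c, 0 ≤ r a b c := fun a b c => ENNReal.toReal_nonneg
  have hABC : shEnt μ (fun ω => ((A ω, B ω), C ω)) =
      ∑ a : K, ∑ b : L, ∑ c : M, Real.negMulLog (r a b c) := by
    unfold shEnt
    rw [Fintype.sum_prod_type, Fintype.sum_prod_type]
  have hmarAC : ∀ (a : K) (c : M),
      (μ ((fun ω => (A ω, C ω)) ⁻¹' {(a, c)})).toReal = ∑ b : L, r a b c := by
    intro a c
    rw [toReal_measure_eq_sum μ hB (hA.prodMk hC) (a, c)]
    refine Finset.sum_congr rfl fun b _ => ?_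
    have hset : ((fun ω => (B ω, (A ω, C ω))) ⁻¹' {(b, (a, c))}) =
        ((fun ω => ((A ω, B ω), C ω)) ⁻¹' {((a, b), c)}) := by
      ext ω
      simp only [Set.mem_preimage, Set.mem_singleton_iff, Prod.mk.injEq]
      tauto
    rw [hr, hset]
  have hAC : shEnt μ (fun ω => (A ω, C ω)) =
      ∑ a : K, ∑ c : M, Real.negMulLog (∑ b : L, r a b c) := by
    unfold shEnt
    rw [Fintype.sum_prod_type]
    exact Finset.sum_congr rfl fun a _ => Finset.sum_congr rfl fun c _ => by
      rw [hmarAC a c]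
  have hmarBC : ∀ (b : L) (c : M),
      (μ ((fun ω => (B ω, C ω)) ⁻¹' {(b, c)})).toReal = ∑ a : K, r a b c := by
    intro b c
    rw [toReal_measure_eq_sum μ hA (hB.prodMk hC) (b, c)]
    refine Finset.sum_congr rfl fun a _ => ?_
    have hset : ((fun ω => (A ω, (B ω, C ω))) ⁻¹' {(a, (b, c))}) =
        ((fun ω => ((A ω, B ω), C ω)) ⁻¹' {((a, b), c)}) := by
      ext ω
      simp only [Set.mem_preimage, Set.mem_singleton_iff, Prod.mk.injEq]
      tauto
    rw [hr, hset]
  have hBC : shEnt μ (fun ω => (B ω, C ω)) =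
      ∑ b : L, ∑ c : M, Real.negMulLog (∑ a : K, r a b c) := by
    unfold shEnt
    rw [Fintype.sum_prod_type]
    exact Finset.sum_congr rfl fun b _ => Finset.sum_congr rfl fun c _ => by
      rw [hmarBC b c]
  have hmarC : ∀ c : M, (μ (C ⁻¹' {c})).toReal = ∑ a : K, ∑ b : L, r a b c := by
    intro c
    rw [toReal_measure_eq_sum μ (hA.prodMk hB) hC c, Fintype.sum_prod_type]
  have hCm : shEnt μ C = ∑ c : M, Real.negMulLog (∑ a : K, ∑ b : L, r a b c) := by
    unfold shEnt
    exact Finset.sum_congr rfl fun c _ => by rw [hmarC c]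
  have hexp : condMutInfo μ A B C =
      (shEnt μ (fun ω => (A ω, C ω)) + shEnt μ (fun ω => (B ω, C ω))) -
        (shEnt μ (fun ω => ((A ω, B ω), C ω)) + shEnt μ C) := by
    unfold condMutInfo condEnt
    ring
  rw [hexp, hAC, hBC, hABC, hCm, sub_nonneg]
  exact cmi_core r hrnn

lemma shEnt_le_of_det {N M : Type*} [Fintype N] [Fintype M]
    [MeasurableSpace N] [MeasurableSingletonClass N]
    [MeasurableSpace M] [MeasurableSingletonClass M]
    (μ : Measure Ω) [IsProbabilityMeasure μ] {D : Ω → N} {C : Ω → M}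
    (hD : Measurable D) (hC : Measurable C) (h : Det D C) :
    shEnt μ C ≤ shEnt μ D := by
  obtain ⟨f, hf⟩ := h
  have e : shEnt μ D = shEnt μ (fun ω => (D ω, C ω)) :=
    shEnt_eq_of_det μ ⟨fun d => (d, f d), fun ω => by simp [hf ω]⟩ ⟨Prod.fst, fun ω => rfl⟩
  have h0 : 0 ≤ condEnt μ D C := condEnt_nonneg μ hD hC
  unfold condEnt at h0
  linarith

lemma condEnt_le_of_det {K N M : Type*} [Fintype K] [Fintype N] [Fintype M]
    [MeasurableSpace K] [MeasurableSingletonClass K]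
    [MeasurableSpace N] [MeasurableSingletonClass N]
    [MeasurableSpace M] [MeasurableSingletonClass M]
    (μ : Measure Ω) [IsProbabilityMeasure μ] {A : Ω → K} {D : Ω → N} {C : Ω → M}
    (hA : Measurable A) (hD : Measurable D) (hC : Measurable C) (h : Det D C) :
    condEnt μ A D ≤ condEnt μ A C := by
  have h0 := condMutInfo_nonneg μ hA hD hC
  obtain ⟨f, hf⟩ := h
  have e1 : shEnt μ (fun ω => ((A ω, D ω), C ω)) = shEnt μ (fun ω => (A ω, D ω)) :=
    shEnt_eq_of_det μ ⟨Prod.fst, fun ω => rfl⟩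
      ⟨fun p => (p, f p.2), fun ω => by simp [hf ω]⟩
  have e2 : shEnt μ (fun ω => (D ω, C ω)) = shEnt μ D :=
    shEnt_eq_of_det μ ⟨Prod.fst, fun ω => rfl⟩
      ⟨fun d => (d, f d), fun ω => by simp [hf ω]⟩
  simp only [condMutInfo, condEnt] at h0 ⊢
  linarith

lemma condEnt_chain {K N M : Type*} [Fintype K] [Fintype N] [Fintype M]
    (μ : Measure Ω) (A : Ω → K) (B : Ω → N) (C : Ω → M) :
    condEnt μ (fun ω => (A ω, B ω)) C =
      condEnt μ B C + condEnt μ A (fun ω => (B ω, C ω)) := by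
  have e : shEnt μ (fun ω => ((A ω, B ω), C ω)) = shEnt μ (fun ω => (A ω, (B ω, C ω))) :=
    shEnt_eq_of_det μ ⟨fun p => (p.1.1, (p.1.2, p.2)), fun ω => rfl⟩
      ⟨fun p => ((p.1, p.2.1), p.2.2), fun ω => rfl⟩
  simp only [condEnt]
  linarith

lemma condEnt_pair_le {K N M : Type*} [Fintype K] [Fintype N] [Fintype M]
    [MeasurableSpace K] [MeasurableSingletonClass K]
    [MeasurableSpace N] [MeasurableSingletonClass N]
    [MeasurableSpace M] [MeasurableSingletonClass M]
    (μ : Measure Ω) [IsProbabilityMeasure μ] {A : Ω → K} {B : Ω → N} {C : Ω → M}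
    (hA : Measurable A) (hB : Measurable B) (hC : Measurable C) :
    condEnt μ (fun ω => (A ω, B ω)) C ≤ condEnt μ A C + condEnt μ B C := by
  have h0 := condMutInfo_nonneg μ hA hB hC
  simp only [condMutInfo] at h0
  linarith

lemma condEnt_subsingleton {N M : Type*} [Fintype N] [Subsingleton N] [Fintype M]
    (μ : Measure Ω) [IsProbabilityMeasure μ] (Z : Ω → N) (W : Ω → M) :
    condEnt μ Z W = 0 := by
  have hΩ : Nonempty Ω := by
    by_contra h
    have huniv : (Set.univ : Set Ω) = ∅ := Set.univ_eq_empty_iff.mpr (not_nonempty_iff.mp h)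
    have h1 : μ Set.univ = 1 := measure_univ
    rw [huniv, measure_empty] at h1
    exact zero_ne_one h1
  obtain ⟨ω₀⟩ := hΩ
  have e : shEnt μ (fun ω => (Z ω, W ω)) = shEnt μ W := by
    refine shEnt_eq_of_det μ ⟨Prod.snd, fun ω => rfl⟩
      ⟨fun w => (Z ω₀, w), fun ω => ?_⟩
    simp [Subsingleton.elim (Z ω₀) (Z ω)]
  unfold condEnt
  rw [e, sub_self]

lemma measurable_joint {ι : Type*} {K : ι → Type*} [∀ i, MeasurableSpace (K i)]
    {X : ∀ i, Ω → K i} (hX : ∀ i, Measurable (X i)) : Measurable (joint X) :=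
  measurable_pi_lambda _ hX

lemma condEnt_joint_le_sum {ι : Type*} [DecidableEq ι] {K : ι → Type*} [∀ i, Fintype (K i)]
    [∀ i, MeasurableSpace (K i)] [∀ i, MeasurableSingletonClass (K i)]
    {M : Type*} [Fintype M] [MeasurableSpace M] [MeasurableSingletonClass M]
    (μ : Measure Ω) [IsProbabilityMeasure μ] (X : ∀ i, Ω → K i) (hX : ∀ i, Measurable (X i))
    (W : Ω → M) (hW : Measurable W) (s : Finset ι) :
    condEnt μ (joint fun j : {j // j ∈ s} => X j.1) W ≤ ∑ j ∈ s, condEnt μ (X j) W := by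
  classical
  induction s using Finset.induction_on with
  | empty =>
      haveI : IsEmpty {j // j ∈ (∅ : Finset ι)} := ⟨fun j => (Finset.notMem_empty j.1 j.2)⟩
      rw [condEnt_subsingleton μ _ W]
      simp
  | @insert a s ha ih =>
      have hJs : Measurable (joint fun j : {j // j ∈ s} => X j.1) :=
        measurable_joint (fun j => hX j.1)
      have hdet1 : Det (joint fun j : {j // j ∈ insert a s} => X j.1)
          (fun ω => (X a ω, joint (fun j : {j // j ∈ s} => X j.1) ω)) :=
        ⟨fun v => (v ⟨a, Finset.mem_insert_self a s⟩,
          fun j => v ⟨j.1, Finset.mem_insert_of_mem j.2⟩), fun ω => rfl⟩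
      have hdet2 : Det (fun ω => (X a ω, joint (fun j : {j // j ∈ s} => X j.1) ω))
          (joint fun j : {j // j ∈ insert a s} => X j.1) := by
        refine ⟨fun p => (fun j => if h : j.1 = a then cast (congrArg K h.symm) p.1
          else p.2 ⟨j.1, (Finset.mem_insert.mp j.2).resolve_left h⟩), fun ω => ?_⟩
        funext j
        rcases j with ⟨j, hj⟩
        dsimp only [joint]
        by_cases h : j = a
        · subst h
          simp
        · rw [dif_neg h]
      calc condEnt μ (joint fun j : {j // j ∈ insert a s} => X j.1) W
          = condEnt μ (fun ω => (X a ω, joint (fun j : {j // j ∈ s} => X j.1) ω)) W :=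
            condEnt_congr μ hdet1 hdet2 (Det.refl W) (Det.refl W)
        _ ≤ condEnt μ (X a) W + condEnt μ (joint fun j : {j // j ∈ s} => X j.1) W :=
            condEnt_pair_le μ (hX a) hJs hW
        _ ≤ condEnt μ (X a) W + ∑ j ∈ s, condEnt μ (X j) W := by linarith [ih]
        _ = ∑ j ∈ insert a s, condEnt μ (X j) W := by rw [Finset.sum_insert ha]

lemma sum_condEnt_erase_le {ι : Type*} [DecidableEq ι] [Fintype ι] {K : ι → Type*}
    [∀ i, Fintype (K i)] [∀ i, MeasurableSpace (K i)] [∀ i, MeasurableSingletonClass (K i)]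
    {M : Type*} [Fintype M] [MeasurableSpace M] [MeasurableSingletonClass M]
    (μ : Measure Ω) [IsProbabilityMeasure μ] (X : ∀ i, Ω → K i) (hX : ∀ i, Measurable (X i))
    (W : Ω → M) (hW : Measurable W) (s : Finset ι) :
    ∑ i ∈ s, condEnt μ (X i) (fun ω => (joint (fun j : {j : ι // j ≠ i} => X j.1) ω, W ω))
      ≤ condEnt μ (joint fun j : {j // j ∈ s} => X j.1) W := by
  classical
  induction s using Finset.induction_on with
  | empty =>
      haveI : IsEmpty {j // j ∈ (∅ : Finset ι)} := ⟨fun j => (Finset.notMem_empty j.1 j.2)⟩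
      rw [condEnt_subsingleton μ _ W]
      simp
  | @insert a s ha ih =>
      have hJs : Measurable (joint fun j : {j // j ∈ s} => X j.1) :=
        measurable_joint (fun j => hX j.1)
      have hMa : Measurable (joint fun j : {j : ι // j ≠ a} => X j.1) :=
        measurable_joint (fun j => hX j.1)
      have hdet1 : Det (joint fun j : {j // j ∈ insert a s} => X j.1)
          (fun ω => (X a ω, joint (fun j : {j // j ∈ s} => X j.1) ω)) :=
        ⟨fun v => (v ⟨a, Finset.mem_insert_self a s⟩,
          fun j => v ⟨j.1, Finset.mem_insert_of_mem j.2⟩), fun ω => rfl⟩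
      have hdet2 : Det (fun ω => (X a ω, joint (fun j : {j // j ∈ s} => X j.1) ω))
          (joint fun j : {j // j ∈ insert a s} => X j.1) := by
        refine ⟨fun p => (fun j => if h : j.1 = a then cast (congrArg K h.symm) p.1
          else p.2 ⟨j.1, (Finset.mem_insert.mp j.2).resolve_left h⟩), fun ω => ?_⟩
        funext j
        rcases j with ⟨j, hj⟩
        dsimp only [joint]
        by_cases h : j = a
        · subst h
          simp
        · rw [dif_neg h]
      have hstep : condEnt μ (X a)
          (fun ω => (joint (fun j : {j : ι // j ≠ a} => X j.1) ω, W ω)) ≤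
          condEnt μ (X a)
          (fun ω => (joint (fun j : {j // j ∈ s} => X j.1) ω, W ω)) := by
        refine condEnt_le_of_det μ (hX a) (hMa.prodMk hW) (hJs.prodMk hW)
          ⟨Prod.map (fun v (j : {j // j ∈ s}) =>
            v ⟨j.1, fun hja => ha (hja ▸ j.2)⟩) id, fun ω => ?_⟩
        simp only [Prod.map, id]
        rfl
      calc ∑ i ∈ insert a s, condEnt μ (X i)
            (fun ω => (joint (fun j : {j : ι // j ≠ i} => X j.1) ω, W ω))
          = condEnt μ (X a) (fun ω => (joint (fun j : {j : ι // j ≠ a} => X j.1) ω, W ω)) +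
            ∑ i ∈ s, condEnt μ (X i)
              (fun ω => (joint (fun j : {j : ι // j ≠ i} => X j.1) ω, W ω)) := by
            rw [Finset.sum_insert ha]
        _ ≤ condEnt μ (X a) (fun ω => (joint (fun j : {j // j ∈ s} => X j.1) ω, W ω)) +
            condEnt μ (joint fun j : {j // j ∈ s} => X j.1) W := by
            have := hstep; linarith [ih]
        _ = condEnt μ (fun ω => (X a ω, joint (fun j : {j // j ∈ s} => X j.1) ω)) W := by
            rw [condEnt_chain]
            ring
        _ = condEnt μ (joint fun j : {j // j ∈ insert a s} => X j.1) W :=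
            (condEnt_congr μ hdet1 hdet2 (Det.refl W) (Det.refl W)).symm

lemma condEnt_joint_le_sum_univ {ι : Type*} [DecidableEq ι] [Fintype ι] {K : ι → Type*}
    [∀ i, Fintype (K i)] [∀ i, MeasurableSpace (K i)] [∀ i, MeasurableSingletonClass (K i)]
    {M : Type*} [Fintype M] [MeasurableSpace M] [MeasurableSingletonClass M]
    (μ : Measure Ω) [IsProbabilityMeasure μ] (X : ∀ i, Ω → K i) (hX : ∀ i, Measurable (X i))
    (W : Ω → M) (hW : Measurable W) :
    condEnt μ (joint X) W ≤ ∑ j : ι, condEnt μ (X j) W := by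
  have h := condEnt_joint_le_sum μ X hX W hW Finset.univ
  refine le_trans (le_of_eq ?_) h
  exact condEnt_congr μ ⟨fun v j => v j.1, fun ω => rfl⟩
    ⟨fun v i => v ⟨i, Finset.mem_univ i⟩, fun ω => rfl⟩ (Det.refl _) (Det.refl _)

lemma sum_condEnt_erase_le_univ {ι : Type*} [DecidableEq ι] [Fintype ι] {K : ι → Type*}
    [∀ i, Fintype (K i)] [∀ i, MeasurableSpace (K i)] [∀ i, MeasurableSingletonClass (K i)]
    {M : Type*} [Fintype M] [MeasurableSpace M] [MeasurableSingletonClass M]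
    (μ : Measure Ω) [IsProbabilityMeasure μ] (X : ∀ i, Ω → K i) (hX : ∀ i, Measurable (X i))
    (W : Ω → M) (hW : Measurable W) :
    ∑ i : ι, condEnt μ (X i)
        (fun ω => (joint (fun j : {j : ι // j ≠ i} => X j.1) ω, W ω)) ≤
      condEnt μ (joint X) W := by
  have h := sum_condEnt_erase_le μ X hX W hW Finset.univ
  refine le_trans h (le_of_eq ?_)
  exact condEnt_congr μ ⟨fun v i => v ⟨i, Finset.mem_univ i⟩, fun ω => rfl⟩
    ⟨fun v j => v j.1, fun ω => rfl⟩ (Det.refl _) (Det.refl _)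

lemma DTC_eq {ι : Type*} [Fintype ι] [DecidableEq ι] {K : ι → Type*}
    [∀ i, Fintype (K i)] (μ : Measure Ω) (V : ∀ i, Ω → K i) :
    DTC μ V = (∑ i, shEnt μ (joint fun j : {j : ι // j ≠ i} => V j.1)) -
      ((Fintype.card ι : ℝ) - 1) * shEnt μ (joint V) := by
  have e : ∀ i : ι, shEnt μ
      (fun ω => (V i ω, joint (fun j : {j : ι // j ≠ i} => V j.1) ω)) = shEnt μ (joint V) := by
    intro i
    refine shEnt_eq_of_det μ
      ⟨fun p => (fun j => if h : j = i then cast (congrArg K h.symm) p.1 else p.2 ⟨j, h⟩),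
        fun ω => ?_⟩
      ⟨fun v => (v i, fun j => v j.1), fun ω => rfl⟩
    funext j
    dsimp only [joint]
    by_cases h : j = i
    · subst h
      simp
    · rw [dif_neg h]
  unfold DTC condEnt
  rw [Finset.sum_sub_distrib]
  have e2 : ∑ i : ι, shEnt μ
      (fun ω => (V i ω, joint (fun j : {j : ι // j ≠ i} => V j.1) ω)) =
      (Fintype.card ι : ℝ) * shEnt μ (joint V) := by
    rw [Finset.sum_congr rfl fun i _ => e i]
    simp [Finset.card_univ, mul_comm]
  rw [e2]
  ring

lemma shEnt_pair_comm {K L : Type*} [Fintype K] [Fintype L]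
    (μ : Measure Ω) (A : Ω → K) (B : Ω → L) :
    shEnt μ (fun ω => (A ω, B ω)) = shEnt μ (fun ω => (B ω, A ω)) :=
  shEnt_eq_of_det μ ⟨Prod.swap, fun ω => rfl⟩ ⟨Prod.swap, fun ω => rfl⟩

lemma det_pair_joint {ι : Type*} [DecidableEq ι] {K : ι → Type*} (X : ∀ i, Ω → K i) (i : ι) :
    Det (fun ω => (X i ω, joint (fun j : {j : ι // j ≠ i} => X j.1) ω)) (joint X) := by
  refine ⟨fun p => (fun j => if h : j = i then cast (congrArg K h.symm) p.1 else p.2 ⟨j, h⟩),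
    fun ω => ?_⟩
  funext j
  dsimp only [joint]
  by_cases h : j = i
  · subst h
    simp
  · rw [dif_neg h]

lemma joint_split_pair {ι : Type*} [Fintype ι] [DecidableEq ι] {A B : ι → Type*}
    [∀ i, Fintype (A i)] [∀ i, Fintype (B i)]
    (μ : Measure Ω) (U : ∀ i, Ω → A i) (V : ∀ i, Ω → B i) :
    shEnt μ (joint fun i => fun ω => (U i ω, V i ω)) =
      shEnt μ (fun ω => (joint U ω, joint V ω)) :=
  shEnt_eq_of_det μ ⟨fun v => (fun j => (v j).1, fun j => (v j).2), fun ω => rfl⟩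
    ⟨fun p j => (p.1 j, p.2 j), fun ω => rfl⟩


/-- `DTC(Y₁;…;Yₙ) ≤ DTC(X₁;…;Xₙ) + (n−1)·∑_{i=1}^n H(Yᵢ | Xᵢ)`; in
particular, if `Xᵢ` almost surely determines `Yᵢ` for each `i` (i.e. `H(Yᵢ | Xᵢ) = 0` for all
`i`), then `DTC(Y₁;…;Yₙ) ≤ DTC(X₁;…;Xₙ)`. -/
theorem dtc_monotone (μ : Measure Ω) [IsProbabilityMeasure μ]
    {n : ℕ} {K L : Fin n → Type*} [∀ i, Fintype (K i)] [∀ i, Fintype (L i)]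
    [∀ i, MeasurableSpace (K i)] [∀ i, MeasurableSingletonClass (K i)]
    [∀ i, MeasurableSpace (L i)] [∀ i, MeasurableSingletonClass (L i)]
    (X : ∀ i, Ω → K i) (hX : ∀ i, Measurable (X i))
    (Y : ∀ i, Ω → L i) (hY : ∀ i, Measurable (Y i)) :
    DTC μ Y ≤ DTC μ X + ((n : ℝ) - 1) * ∑ i : Fin n, condEnt μ (Y i) (X i) ∧
      ((∀ i, condEnt μ (Y i) (X i) = 0) → DTC μ Y ≤ DTC μ X) := by
  classical
  rcases Nat.eq_zero_or_pos n with hn | hn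
  · subst hn
    have hY0 : DTC μ Y = 0 := by
      unfold DTC
      rw [shEnt_subsingleton]
      simp
    have hX0 : DTC μ X = 0 := by
      unfold DTC
      rw [shEnt_subsingleton]
      simp
    constructor
    · rw [hY0, hX0]
      simp
    · intro _
      rw [hY0, hX0]
  · have hn1 : (1 : ℝ) ≤ (n : ℝ) := by exact_mod_cast hn
    have hjX : Measurable (joint X) := measurable_joint hX
    have hjY : Measurable (joint Y) := measurable_joint hY
    have hZ : ∀ i, Measurable (fun ω => (X i ω, Y i ω)) := fun i => (hX i).prodMk (hY i)
    have hjZ : Measurable (joint fun i => fun ω => (X i ω, Y i ω)) :=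
      measurable_joint hZ
    have hmarX : ∀ i : Fin n, Measurable (joint fun j : {j : Fin n // j ≠ i} => X j.1) :=
      fun i => measurable_joint fun j => hX j.1
    have hmarY : ∀ i : Fin n, Measurable (joint fun j : {j : Fin n // j ≠ i} => Y j.1) :=
      fun i => measurable_joint fun j => hY j.1
    -- DTC identities
    have dtcY := DTC_eq μ Y
    have dtcX := DTC_eq μ X
    simp only [Fintype.card_fin] at dtcY dtcX
    -- splitting of Z-marginals
    have split : ∀ i : Fin n,
        shEnt μ (joint fun j : {j : Fin n // j ≠ i} => fun ω => (X j.1 ω, Y j.1 ω)) =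
        shEnt μ (fun ω => (joint (fun j : {j : Fin n // j ≠ i} => X j.1) ω,
          joint (fun j : {j : Fin n // j ≠ i} => Y j.1) ω)) :=
      fun i => joint_split_pair μ (fun j : {j : Fin n // j ≠ i} => X j.1)
        (fun j : {j : Fin n // j ≠ i} => Y j.1)
    have splitJ : shEnt μ (joint fun i => fun ω => (X i ω, Y i ω)) =
        shEnt μ (fun ω => (joint X ω, joint Y ω)) := joint_split_pair μ X Y
    -- (B) : H(jY) = H(jZ) - H(jX | jY)
    have hB : shEnt μ (joint fun i => fun ω => (X i ω, Y i ω)) =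
        condEnt μ (joint X) (joint Y) + shEnt μ (joint Y) := by
      rw [splitJ]
      unfold condEnt
      ring
    -- (A) per i
    have hA : ∀ i : Fin n,
        shEnt μ (joint fun j : {j : Fin n // j ≠ i} => Y j.1) ≤
        shEnt μ (joint fun j : {j : Fin n // j ≠ i} => fun ω => (X j.1 ω, Y j.1 ω)) -
          condEnt μ (joint fun j : {j : Fin n // j ≠ i} => X j.1) (joint Y) := by
      intro i
      have e1 : shEnt μ (joint fun j : {j : Fin n // j ≠ i} => fun ω => (X j.1 ω, Y j.1 ω)) =
          condEnt μ (joint fun j : {j : Fin n // j ≠ i} => X j.1)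
            (joint fun j : {j : Fin n // j ≠ i} => Y j.1) +
          shEnt μ (joint fun j : {j : Fin n // j ≠ i} => Y j.1) := by
        rw [split i]
        unfold condEnt
        ring
      have e2 : condEnt μ (joint fun j : {j : Fin n // j ≠ i} => X j.1) (joint Y) ≤
          condEnt μ (joint fun j : {j : Fin n // j ≠ i} => X j.1)
            (joint fun j : {j : Fin n // j ≠ i} => Y j.1) :=
        condEnt_le_of_det μ (hmarX i) hjY (hmarY i) ⟨fun v j => v j.1, fun ω => rfl⟩
      linarith
    -- (Han)
    have hchain : ∀ i : Fin n, condEnt μ (joint X) (joint Y) =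
        condEnt μ (joint fun j : {j : Fin n // j ≠ i} => X j.1) (joint Y) +
        condEnt μ (X i)
          (fun ω => (joint (fun j : {j : Fin n // j ≠ i} => X j.1) ω, joint Y ω)) := by
      intro i
      have hcongr : condEnt μ (joint X) (joint Y) =
          condEnt μ (fun ω => (X i ω, joint (fun j : {j : Fin n // j ≠ i} => X j.1) ω))
            (joint Y) :=
        condEnt_congr μ ⟨fun v => (v i, fun j => v j.1), fun ω => rfl⟩
          (det_pair_joint X i) (Det.refl _) (Det.refl _)
      rw [hcongr, condEnt_chain]
    have hsum3 := sum_condEnt_erase_le_univ μ X hX (joint Y) hjY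
    have hHan : ((n : ℝ) - 1) * condEnt μ (joint X) (joint Y) ≤
        ∑ i : Fin n, condEnt μ (joint fun j : {j : Fin n // j ≠ i} => X j.1) (joint Y) := by
      have h1 : ∑ i : Fin n,
          condEnt μ (joint fun j : {j : Fin n // j ≠ i} => X j.1) (joint Y) =
          (n : ℝ) * condEnt μ (joint X) (joint Y) -
          ∑ i : Fin n, condEnt μ (X i)
            (fun ω => (joint (fun j : {j : Fin n // j ≠ i} => X j.1) ω, joint Y ω)) := by
        have hcg := Finset.sum_congr rfl fun (i : Fin n) (_ : i ∈ Finset.univ) =>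
          (by linarith [hchain i] :
            condEnt μ (joint fun j : {j : Fin n // j ≠ i} => X j.1) (joint Y) =
            condEnt μ (joint X) (joint Y) -
            condEnt μ (X i)
              (fun ω => (joint (fun j : {j : Fin n // j ≠ i} => X j.1) ω, joint Y ω)))
        rw [hcg, Finset.sum_sub_distrib, Finset.sum_const, Finset.card_univ,
          Fintype.card_fin, nsmul_eq_mul]
      linarith
    -- (E)+(D) per i
    have hED : ∀ i : Fin n,
        shEnt μ (joint fun j : {j : Fin n // j ≠ i} => fun ω => (X j.1 ω, Y j.1 ω)) ≤
        shEnt μ (joint fun j : {j : Fin n // j ≠ i} => X j.1) +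
          ((∑ j : Fin n, condEnt μ (Y j) (X j)) - condEnt μ (Y i) (X i)) := by
      intro i
      have e1 : shEnt μ (joint fun j : {j : Fin n // j ≠ i} => fun ω => (X j.1 ω, Y j.1 ω)) =
          condEnt μ (joint fun j : {j : Fin n // j ≠ i} => Y j.1)
            (joint fun j : {j : Fin n // j ≠ i} => X j.1) +
          shEnt μ (joint fun j : {j : Fin n // j ≠ i} => X j.1) := by
        rw [split i, shEnt_pair_comm]
        unfold condEnt
        ring
      have h1 := condEnt_joint_le_sum_univ (μ := μ) (fun j : {j : Fin n // j ≠ i} => Y j.1)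
        (fun j => hY j.1) (joint fun j : {j : Fin n // j ≠ i} => X j.1) (hmarX i)
      have h3 : ∀ j : {j : Fin n // j ≠ i},
          condEnt μ (Y j.1) (joint fun j : {j : Fin n // j ≠ i} => X j.1) ≤
          condEnt μ (Y j.1) (X j.1) := fun j =>
        condEnt_le_of_det μ (hY j.1) (hmarX i) (hX j.1) ⟨fun v => v j, fun ω => rfl⟩
      have h4 : ∑ j : {j : Fin n // j ≠ i},
          condEnt μ (Y j.1) (joint fun j : {j : Fin n // j ≠ i} => X j.1) ≤
          ∑ j : {j : Fin n // j ≠ i}, condEnt μ (Y j.1) (X j.1) :=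
        Finset.sum_le_sum fun j _ => h3 j
      have h5 : ∑ j : {j : Fin n // j ≠ i}, condEnt μ (Y j.1) (X j.1) =
          (∑ j : Fin n, condEnt μ (Y j) (X j)) - condEnt μ (Y i) (X i) := by
        have hmem : ∀ x : Fin n, x ∈ Finset.univ.erase i ↔ x ≠ i := by
          intro x
          simp [Finset.mem_erase]
        rw [← Finset.sum_subtype (Finset.univ.erase i) hmem
          (fun j => condEnt μ (Y j) (X j))]
        have := Finset.sum_erase_add Finset.univ
          (fun j => condEnt μ (Y j) (X j)) (Finset.mem_univ i)
        linarith
      linarith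
    -- (F)
    have hF : shEnt μ (joint X) ≤ shEnt μ (joint fun i => fun ω => (X i ω, Y i ω)) :=
      shEnt_le_of_det μ hjZ hjX ⟨fun v i => (v i).1, fun ω => rfl⟩
    have hFn : ((n : ℝ) - 1) * shEnt μ (joint X) ≤
        ((n : ℝ) - 1) * shEnt μ (joint fun i => fun ω => (X i ω, Y i ω)) :=
      mul_le_mul_of_nonneg_left hF (by linarith)
    -- sum the per-i inequalities
    have sumA : ∑ i : Fin n, shEnt μ (joint fun j : {j : Fin n // j ≠ i} => Y j.1) ≤
        (∑ i : Fin n,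
          shEnt μ (joint fun j : {j : Fin n // j ≠ i} => fun ω => (X j.1 ω, Y j.1 ω))) -
        ∑ i : Fin n, condEnt μ (joint fun j : {j : Fin n // j ≠ i} => X j.1) (joint Y) := by
      rw [← Finset.sum_sub_distrib]
      exact Finset.sum_le_sum fun i _ => by linarith [hA i]
    have sumED : ∑ i : Fin n,
        shEnt μ (joint fun j : {j : Fin n // j ≠ i} => fun ω => (X j.1 ω, Y j.1 ω)) ≤
        (∑ i : Fin n, shEnt μ (joint fun j : {j : Fin n // j ≠ i} => X j.1)) +
          ((n : ℝ) - 1) * ∑ j : Fin n, condEnt μ (Y j) (X j) := by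
      calc ∑ i : Fin n,
          shEnt μ (joint fun j : {j : Fin n // j ≠ i} => fun ω => (X j.1 ω, Y j.1 ω)) ≤
          ∑ i : Fin n, (shEnt μ (joint fun j : {j : Fin n // j ≠ i} => X j.1) +
            ((∑ j : Fin n, condEnt μ (Y j) (X j)) - condEnt μ (Y i) (X i))) :=
            Finset.sum_le_sum fun i _ => hED i
        _ = (∑ i : Fin n, shEnt μ (joint fun j : {j : Fin n // j ≠ i} => X j.1)) +
            ((n : ℝ) - 1) * ∑ j : Fin n, condEnt μ (Y j) (X j) := by
            rw [Finset.sum_add_distrib, Finset.sum_sub_distrib, Finset.sum_const,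
              Finset.card_univ, Fintype.card_fin, nsmul_eq_mul]
            ring
    have main : DTC μ Y ≤ DTC μ X + ((n : ℝ) - 1) * ∑ i : Fin n, condEnt μ (Y i) (X i) := by
      rw [dtcY, dtcX]
      nlinarith [sumA, sumED, hHan, hB, hFn, hn1]
    refine ⟨main, fun h => ?_⟩
    have hS : ∑ i : Fin n, condEnt μ (Y i) (X i) = 0 :=
      Finset.sum_eq_zero fun i _ => h i
    rw [hS] at main
    linarith


end Corr
end

section
/- For any finite-valued random variables X₁, …, Xₙ on a common probability space, both TC(X₁;…;Xₙ) and DTC(X₁;…;Xₙ) lie between max_{i∈[n]} I(Xᵢ ; X_{[n]∖i}) and (n−1)·max_{i∈[n]} I(Xᵢ ; X_{[n]∖i}). In particular, DTC(X₁;…;Xₙ) ≤ (n−1)·TC(X₁;…;Xₙ) and TC(X₁;…;Xₙ) ≤ (n−1)·DTC(X₁;…;Xₙ). -/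
open MeasureTheory Real

namespace Corr

variable {Ω : Type*} [MeasurableSpace Ω]

section AuxLemmas

variable (μ : Measure Ω) [IsProbabilityMeasure μ]

lemma meas_comp_fiber {D E : Type*} [Fintype D] [DecidableEq E] [MeasurableSpace D]
    [MeasurableSingletonClass D] {T : Ω → D} (hT : Measurable T) (f : D → E) (e : E) :
    (μ ((fun ω => f (T ω)) ⁻¹' {e})).toReal
      = ∑ d ∈ Finset.univ.filter (fun d => f d = e), (μ (T ⁻¹' {d})).toReal := by
  have hset : (fun ω => f (T ω)) ⁻¹' {e}
      = ⋃ d ∈ Finset.univ.filter (fun d => f d = e), T ⁻¹' {d} := by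
    ext ω
    simp only [Set.mem_preimage, Set.mem_singleton_iff, Set.mem_iUnion, Finset.mem_filter,
      Finset.mem_univ, true_and]
    constructor
    · intro h; exact ⟨T ω, h, rfl⟩
    · rintro ⟨d, hd, hTd⟩; rw [hTd]; exact hd
  rw [hset, measure_biUnion_finset ?_ (fun d _ => hT (measurableSet_singleton d)),
    ENNReal.toReal_sum (fun d _ => measure_ne_top μ _)]
  intro d _ d' _ hne
  exact Set.disjoint_left.2 fun ω h h' => hne (by
    simp only [Set.mem_preimage, Set.mem_singleton_iff] at h h'; rw [← h, ← h'])

lemma sum_meas_fiber {D : Type*} [Fintype D] [MeasurableSpace D]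
    [MeasurableSingletonClass D] {T : Ω → D} (hT : Measurable T) :
    ∑ d : D, (μ (T ⁻¹' {d})).toReal = 1 := by
  rw [← ENNReal.toReal_sum (fun d _ => measure_ne_top μ _),
    sum_measure_preimage_singleton _ (fun d _ => hT (measurableSet_singleton d))]
  simp

lemma negMulLog_sum_le_s7 {D : Type*} (s : Finset D) (g : D → ℝ) (hg : ∀ d ∈ s, 0 ≤ g d) :
    Real.negMulLog (∑ d ∈ s, g d) ≤ ∑ d ∈ s, Real.negMulLog (g d) := by
  rw [Real.negMulLog, neg_mul, Finset.sum_mul, ← Finset.sum_neg_distrib]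
  refine Finset.sum_le_sum fun d hd => ?_
  rw [Real.negMulLog, neg_mul, neg_le_neg_iff]
  rcases (hg d hd).eq_or_lt with h0 | h0
  · simp [← h0]
  · have hle : g d ≤ ∑ x ∈ s, g x := Finset.single_le_sum hg hd
    have := Real.log_le_log h0 hle
    nlinarith

lemma shEnt_comp_le {D E : Type*} [Fintype D] [Fintype E] [MeasurableSpace D]
    [MeasurableSingletonClass D] {T : Ω → D} (hT : Measurable T) (f : D → E) :
    shEnt μ (fun ω => f (T ω)) ≤ shEnt μ T := by
  classical
  unfold shEnt
  calc ∑ e : E, Real.negMulLog ((μ ((fun ω => f (T ω)) ⁻¹' {e})).toReal)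
      = ∑ e : E, Real.negMulLog (∑ d ∈ Finset.univ.filter (fun d => f d = e),
          (μ (T ⁻¹' {d})).toReal) := by
        refine Finset.sum_congr rfl fun e _ => ?_
        rw [meas_comp_fiber μ hT f e]
    _ ≤ ∑ e : E, ∑ d ∈ Finset.univ.filter (fun d => f d = e),
          Real.negMulLog ((μ (T ⁻¹' {d})).toReal) := by
        refine Finset.sum_le_sum fun e _ => ?_
        exact negMulLog_sum_le_s7 _ _ fun d _ => ENNReal.toReal_nonneg
    _ = ∑ d : D, Real.negMulLog ((μ (T ⁻¹' {d})).toReal) := by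
        exact Finset.sum_fiberwise Finset.univ f _

lemma shEnt_congr {D E : Type*} [Fintype D] [Fintype E] [MeasurableSpace D]
    [MeasurableSingletonClass D] [MeasurableSpace E] [MeasurableSingletonClass E]
    {T : Ω → D} {U : Ω → E} (hT : Measurable T) (hU : Measurable U)
    (f : E → D) (g : D → E) (hf : ∀ ω, T ω = f (U ω)) (hg : ∀ ω, U ω = g (T ω)) :
    shEnt μ T = shEnt μ U := by
  refine le_antisymm ?_ ?_
  · have h := shEnt_comp_le μ hU f
    have : (fun ω => f (U ω)) = T := funext fun ω => (hf ω).symm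
    rwa [this] at h
  · have h := shEnt_comp_le μ hT g
    have : (fun ω => g (T ω)) = U := funext fun ω => (hg ω).symm
    rwa [this] at h

lemma shEnt_unique {D : Type*} [Fintype D] [Unique D] (T : Ω → D) : shEnt μ T = 0 := by
  unfold shEnt
  rw [Fintype.sum_unique]
  have : T ⁻¹' {default} = Set.univ := by
    ext ω; simp [Unique.eq_default (T ω)]
  rw [this, measure_univ, ENNReal.toReal_one, Real.negMulLog_one]

lemma gibbs_term_s7 {q s : ℝ} (hq : 0 ≤ q) (hs : 0 ≤ s) (h : 0 < q → 0 < s) :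
    q - s ≤ q * (log q - log s) := by
  rcases hq.eq_or_lt with h0 | hq'
  · simp [← h0, hs]
  · have hs' := h hq'
    have hlog : log (s / q) ≤ s / q - 1 := Real.log_le_sub_one_of_pos (by positivity)
    rw [Real.log_div (ne_of_gt hs') (ne_of_gt hq')] at hlog
    have h2 : q * (log s - log q) ≤ q * (s / q - 1) :=
      mul_le_mul_of_nonneg_left hlog hq'.le
    have h3 : q * (s / q) = s := by field_simp
    nlinarith

lemma gibbs_sum {A B C : Type*} [Fintype A] [Fintype B] [Fintype C]
    (q : (A × B) × C → ℝ) (hq0 : ∀ t, 0 ≤ q t) (htot : ∑ t, q t = 1) :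
    ∑ t, Real.negMulLog (q t) + ∑ c, Real.negMulLog (∑ a, ∑ b, q ((a,b),c))
      ≤ (∑ a, ∑ c, Real.negMulLog (∑ b, q ((a,b),c)))
        + ∑ b, ∑ c, Real.negMulLog (∑ a, q ((a,b),c)) := by
  classical
  set pxz : A → C → ℝ := fun a c => ∑ b, q ((a,b),c) with hpxz
  set pyz : B → C → ℝ := fun b c => ∑ a, q ((a,b),c) with hpyz
  set pz : C → ℝ := fun c => ∑ a, ∑ b, q ((a,b),c) with hpz
  have hpxz0 : ∀ a c, 0 ≤ pxz a c := fun a c => Finset.sum_nonneg fun _ _ => hq0 _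
  have hpyz0 : ∀ b c, 0 ≤ pyz b c := fun b c => Finset.sum_nonneg fun _ _ => hq0 _
  have hpz0 : ∀ c, 0 ≤ pz c := fun c =>
    Finset.sum_nonneg fun _ _ => Finset.sum_nonneg fun _ _ => hq0 _
  have hq_le_pxz : ∀ a b c, q ((a,b),c) ≤ pxz a c := fun a b c =>
    Finset.single_le_sum (fun b _ => hq0 ((a,b),c)) (Finset.mem_univ b)
  have hq_le_pyz : ∀ a b c, q ((a,b),c) ≤ pyz b c := fun a b c =>
    Finset.single_le_sum (fun a _ => hq0 ((a,b),c)) (Finset.mem_univ a)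
  have hpxz_le_pz : ∀ a c, pxz a c ≤ pz c := fun a c =>
    Finset.single_le_sum (fun a _ => hpxz0 a c) (Finset.mem_univ a)
  -- sum over t as triple sums
  have tsum : ∀ g : (A × B) × C → ℝ, ∑ t, g t = ∑ a, ∑ b, ∑ c, g ((a,b),c) := by
    intro g
    rw [Fintype.sum_prod_type, Fintype.sum_prod_type]
  -- rewrite the three marginal entropies
  have EXZ : ∑ a, ∑ c, Real.negMulLog (pxz a c)
      = ∑ t : (A × B) × C, -(q t * Real.log (pxz t.1.1 t.2)) := by
    calc ∑ a, ∑ c, Real.negMulLog (pxz a c)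
        = ∑ a, ∑ c, ∑ b, -(q ((a,b),c) * Real.log (pxz a c)) :=
          Finset.sum_congr rfl fun a _ => Finset.sum_congr rfl fun c _ => by
            rw [Real.negMulLog, hpxz, neg_mul, Finset.sum_mul, ← Finset.sum_neg_distrib]
      _ = ∑ a, ∑ b, ∑ c, -(q ((a,b),c) * Real.log (pxz a c)) :=
          Finset.sum_congr rfl fun a _ => Finset.sum_comm
      _ = ∑ t : (A × B) × C, -(q t * Real.log (pxz t.1.1 t.2)) :=
          (tsum fun t => -(q t * Real.log (pxz t.1.1 t.2))).symm
  have EYZ : ∑ b, ∑ c, Real.negMulLog (pyz b c)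
      = ∑ t : (A × B) × C, -(q t * Real.log (pyz t.1.2 t.2)) := by
    calc ∑ b, ∑ c, Real.negMulLog (pyz b c)
        = ∑ b, ∑ c, ∑ a, -(q ((a,b),c) * Real.log (pyz b c)) :=
          Finset.sum_congr rfl fun b _ => Finset.sum_congr rfl fun c _ => by
            rw [Real.negMulLog, hpyz, neg_mul, Finset.sum_mul, ← Finset.sum_neg_distrib]
      _ = ∑ b, ∑ a, ∑ c, -(q ((a,b),c) * Real.log (pyz b c)) :=
          Finset.sum_congr rfl fun b _ => Finset.sum_comm
      _ = ∑ a, ∑ b, ∑ c, -(q ((a,b),c) * Real.log (pyz b c)) := Finset.sum_comm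
      _ = ∑ t : (A × B) × C, -(q t * Real.log (pyz t.1.2 t.2)) :=
          (tsum fun t => -(q t * Real.log (pyz t.1.2 t.2))).symm
  have EZ : ∑ c, Real.negMulLog (pz c)
      = ∑ t : (A × B) × C, -(q t * Real.log (pz t.2)) := by
    calc ∑ c, Real.negMulLog (pz c)
        = ∑ c, ∑ a, ∑ b, -(q ((a,b),c) * Real.log (pz c)) :=
          Finset.sum_congr rfl fun c _ => by
            rw [Real.negMulLog, hpz, neg_mul, Finset.sum_mul, ← Finset.sum_neg_distrib]
            exact Finset.sum_congr rfl fun a _ => by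
              rw [Finset.sum_mul, ← Finset.sum_neg_distrib]
      _ = ∑ a, ∑ c, ∑ b, -(q ((a,b),c) * Real.log (pz c)) := Finset.sum_comm
      _ = ∑ a, ∑ b, ∑ c, -(q ((a,b),c) * Real.log (pz c)) :=
          Finset.sum_congr rfl fun a _ => Finset.sum_comm
      _ = ∑ t : (A × B) × C, -(q t * Real.log (pz t.2)) :=
          (tsum fun t => -(q t * Real.log (pz t.2))).symm
  have EQ : ∑ t, Real.negMulLog (q t) = ∑ t, -(q t * Real.log (q t)) := by
    refine Finset.sum_congr rfl fun t _ => ?_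
    rw [Real.negMulLog, neg_mul]
  set s' : (A × B) × C → ℝ :=
    fun t => pxz t.1.1 t.2 * pyz t.1.2 t.2 / pz t.2 with hs'
  have hs'0 : ∀ t, 0 ≤ s' t := fun t =>
    div_nonneg (mul_nonneg (hpxz0 _ _) (hpyz0 _ _)) (hpz0 _)
  have key : ∀ t, q t - s' t
      ≤ (-(q t * Real.log (pxz t.1.1 t.2)) + -(q t * Real.log (pyz t.1.2 t.2)))
        - (-(q t * Real.log (q t)) + -(q t * Real.log (pz t.2))) := by
    rintro ⟨⟨a, b⟩, c⟩
    rcases (hq0 ((a,b),c)).eq_or_lt with h0 | hq'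
    · simp only [hs', ← h0, zero_mul, neg_zero, add_zero, sub_zero, zero_sub, zero_mul]
      simpa using hs'0 ((a,b),c)
    · have hx : 0 < pxz a c := lt_of_lt_of_le hq' (hq_le_pxz a b c)
      have hy : 0 < pyz b c := lt_of_lt_of_le hq' (hq_le_pyz a b c)
      have hz : 0 < pz c := lt_of_lt_of_le hx (hpxz_le_pz a c)
      have hspos : 0 < s' ((a,b),c) := div_pos (mul_pos hx hy) hz
      have hlogs : Real.log (s' ((a,b),c))
          = Real.log (pxz a c) + Real.log (pyz b c) - Real.log (pz c) := by
        rw [hs', Real.log_div (mul_pos hx hy).ne' hz.ne', Real.log_mul hx.ne' hy.ne']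
      have := gibbs_term_s7 hq'.le (hs'0 ((a,b),c)) (fun _ => hspos)
      rw [hlogs] at this
      ring_nf at this ⊢
      linarith
  have hsum_s : ∑ t, s' t ≤ 1 := by
    have hper : ∀ c, ∑ a, ∑ b, s' ((a,b),c) ≤ pz c := by
      intro c
      have halg : ∑ a, ∑ b, (pxz a c * pyz b c / pz c)
          = (∑ a, pxz a c) * (∑ b, pyz b c) / pz c := by
        conv_rhs => rw [Finset.sum_mul, Finset.sum_div]
        refine Finset.sum_congr rfl fun a _ => ?_
        rw [Finset.mul_sum, Finset.sum_div]
      have hA : ∑ a, pxz a c = pz c := by rw [hpz]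
      have hB : ∑ b, pyz b c = pz c := by rw [hpz]; exact Finset.sum_comm
      calc ∑ a, ∑ b, s' ((a,b),c) = (∑ a, pxz a c) * (∑ b, pyz b c) / pz c := halg
        _ = pz c * pz c / pz c := by rw [hA, hB]
        _ ≤ pz c := by
            rcases (hpz0 c).eq_or_lt with h0 | h0
            · rw [← h0]; simp
            · rw [mul_div_assoc, div_self h0.ne', mul_one]
    have tswap : ∀ g : (A × B) × C → ℝ, ∑ t, g t = ∑ c, ∑ a, ∑ b, g ((a,b),c) := by
      intro g
      rw [tsum g]
      calc ∑ a, ∑ b, ∑ c, g ((a,b),c)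
          = ∑ a, ∑ c, ∑ b, g ((a,b),c) :=
            Finset.sum_congr rfl fun a _ => Finset.sum_comm
        _ = ∑ c, ∑ a, ∑ b, g ((a,b),c) := Finset.sum_comm
    have h1 : ∑ t, s' t = ∑ c, ∑ a, ∑ b, s' ((a,b),c) := tswap s'
    have h2 : ∑ c, pz c = 1 := by
      rw [← htot, tswap (fun t => q t)]
    rw [h1, ← h2]
    exact Finset.sum_le_sum fun c _ => hper c
  rw [EXZ, EYZ, EZ, EQ, ← Finset.sum_add_distrib, ← Finset.sum_add_distrib, ← sub_nonneg,
    ← Finset.sum_sub_distrib]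
  have : 1 - ∑ t, s' t ≤ ∑ t, ((-(q t * Real.log (pxz t.1.1 t.2))
      + -(q t * Real.log (pyz t.1.2 t.2)))
      - (-(q t * Real.log (q t)) + -(q t * Real.log (pz t.2)))) := by
    rw [← htot, ← Finset.sum_sub_distrib]
    exact Finset.sum_le_sum fun t _ => key t
  linarith

section Submod
variable {A B C : Type*} [Fintype A] [Fintype B] [Fintype C]

lemma fiber_snd [DecidableEq C] (g : (A × B) × C → ℝ) (c : C) :
    ∑ t ∈ Finset.univ.filter (fun t : (A × B) × C => t.2 = c), g t
      = ∑ ab : A × B, g (ab, c) := by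
  rw [Finset.sum_filter, Fintype.sum_prod_type]
  simp [Finset.sum_ite_eq']

lemma fiber_xz [DecidableEq A] [DecidableEq C] (g : (A × B) × C → ℝ) (a : A) (c : C) :
    ∑ t ∈ Finset.univ.filter (fun t : (A × B) × C => (t.1.1, t.2) = (a, c)), g t
      = ∑ b, g ((a, b), c) := by
  rw [Finset.sum_filter, Fintype.sum_prod_type, Fintype.sum_prod_type]
  simp [Prod.ext_iff, ite_and, Finset.sum_ite_eq', Finset.sum_ite_eq]

lemma fiber_yz [DecidableEq B] [DecidableEq C] (g : (A × B) × C → ℝ) (b : B) (c : C) :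
    ∑ t ∈ Finset.univ.filter (fun t : (A × B) × C => (t.1.2, t.2) = (b, c)), g t
      = ∑ a, g ((a, b), c) := by
  rw [Finset.sum_filter, Fintype.sum_prod_type, Fintype.sum_prod_type]
  rw [Finset.sum_comm]
  simp [Prod.ext_iff, ite_and, Finset.sum_ite_eq', Finset.sum_ite_eq]

variable [MeasurableSpace A] [MeasurableSpace B] [MeasurableSpace C]
    [MeasurableSingletonClass A] [MeasurableSingletonClass B] [MeasurableSingletonClass C]

lemma submod {X : Ω → A} {Y : Ω → B} {Z : Ω → C}
    (hX : Measurable X) (hY : Measurable Y) (hZ : Measurable Z) :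
    shEnt μ (fun ω => ((X ω, Y ω), Z ω)) + shEnt μ Z
      ≤ shEnt μ (fun ω => (X ω, Z ω)) + shEnt μ (fun ω => (Y ω, Z ω)) := by
  classical
  have hW : Measurable fun ω => ((X ω, Y ω), Z ω) := (hX.prodMk hY).prodMk hZ
  set q : (A × B) × C → ℝ :=
    fun t => (μ ((fun ω => ((X ω, Y ω), Z ω)) ⁻¹' {t})).toReal with hqdef
  have main := gibbs_sum q (fun t => ENNReal.toReal_nonneg) (sum_meas_fiber μ hW)
  have E1 : shEnt μ (fun ω => ((X ω, Y ω), Z ω)) = ∑ t, Real.negMulLog (q t) := rfl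
  have E2 : shEnt μ Z = ∑ c, Real.negMulLog (∑ a, ∑ b, q ((a,b),c)) := by
    refine Finset.sum_congr rfl fun c _ => ?_
    have h : (μ (Z ⁻¹' {c})).toReal
        = ∑ t ∈ Finset.univ.filter (fun t : (A × B) × C => t.2 = c), q t :=
      meas_comp_fiber μ hW (fun t => t.2) c
    rw [h, fiber_snd q c, Fintype.sum_prod_type]
  have E3 : shEnt μ (fun ω => (X ω, Z ω))
      = ∑ a, ∑ c, Real.negMulLog (∑ b, q ((a,b),c)) := by
    unfold shEnt
    rw [Fintype.sum_prod_type]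
    refine Finset.sum_congr rfl fun a _ => Finset.sum_congr rfl fun c _ => ?_
    have h : (μ ((fun ω => (X ω, Z ω)) ⁻¹' {(a, c)})).toReal
        = ∑ t ∈ Finset.univ.filter (fun t : (A × B) × C => (t.1.1, t.2) = (a, c)), q t :=
      meas_comp_fiber μ hW (fun t => (t.1.1, t.2)) (a, c)
    rw [h, fiber_xz q a c]
  have E4 : shEnt μ (fun ω => (Y ω, Z ω))
      = ∑ b, ∑ c, Real.negMulLog (∑ a, q ((a,b),c)) := by
    unfold shEnt
    rw [Fintype.sum_prod_type]
    refine Finset.sum_congr rfl fun b _ => Finset.sum_congr rfl fun c _ => ?_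
    have h : (μ ((fun ω => (Y ω, Z ω)) ⁻¹' {(b, c)})).toReal
        = ∑ t ∈ Finset.univ.filter (fun t : (A × B) × C => (t.1.2, t.2) = (b, c)), q t :=
      meas_comp_fiber μ hW (fun t => (t.1.2, t.2)) (b, c)
    rw [h, fiber_yz q b c]
  rw [E1, E2, E3, E4]
  exact main

end Submod


section CondLemmas
variable {A D E : Type*} [Fintype A] [Fintype D] [Fintype E]
    [MeasurableSpace A] [MeasurableSpace D] [MeasurableSpace E]
    [MeasurableSingletonClass A] [MeasurableSingletonClass D] [MeasurableSingletonClass E]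

lemma shEnt_pair_le {X : Ω → A} {Y : Ω → D} (hX : Measurable X) (hY : Measurable Y) :
    shEnt μ (fun ω => (X ω, Y ω)) ≤ shEnt μ X + shEnt μ Y := by
  have hZ : Measurable (fun _ : Ω => ()) := measurable_const
  have h := submod μ hX hY hZ
  have e0 : shEnt μ (fun _ : Ω => ()) = 0 := shEnt_unique μ _
  have e1 : shEnt μ (fun ω => ((X ω, Y ω), ())) = shEnt μ (fun ω => (X ω, Y ω)) :=
    shEnt_congr μ (((hX.prodMk hY)).prodMk hZ) (hX.prodMk hY)
      (fun p => (p, ())) Prod.fst (fun ω => rfl) (fun ω => rfl)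
  have e2 : shEnt μ (fun ω => (X ω, ())) = shEnt μ X :=
    shEnt_congr μ (hX.prodMk hZ) hX (fun x => (x, ())) Prod.fst
      (fun ω => rfl) (fun ω => rfl)
  have e3 : shEnt μ (fun ω => (Y ω, ())) = shEnt μ Y :=
    shEnt_congr μ (hY.prodMk hZ) hY (fun y => (y, ())) Prod.fst
      (fun ω => rfl) (fun ω => rfl)
  rw [e1, e0, e2, e3, add_zero] at h
  exact h

lemma condEnt_mono_right {X : Ω → A} {V : Ω → D} {W : Ω → E}
    (hX : Measurable X) (hV : Measurable V) (hW : Measurable W)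
    (g : E → D) (hg : ∀ ω, V ω = g (W ω)) :
    condEnt μ X W ≤ condEnt μ X V := by
  have h1 : shEnt μ (fun ω => ((X ω, W ω), V ω)) = shEnt μ (fun ω => (X ω, W ω)) :=
    shEnt_congr μ ((hX.prodMk hW).prodMk hV) (hX.prodMk hW)
      (fun p : A × E => ((p.1, p.2), g p.2)) Prod.fst
      (fun ω => by rw [hg ω]) (fun ω => rfl)
  have h2 : shEnt μ (fun ω => (W ω, V ω)) = shEnt μ W :=
    shEnt_congr μ (hW.prodMk hV) hW (fun w => (w, g w)) Prod.fst
      (fun ω => by rw [hg ω]) (fun ω => rfl)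
  have h3 := submod μ hX hW hV
  unfold condEnt
  rw [h1, h2] at h3
  linarith

lemma condEnt_congr_right {X : Ω → A} {V : Ω → D} {W : Ω → E}
    (hX : Measurable X) (hV : Measurable V) (hW : Measurable W)
    (g : E → D) (hg : ∀ ω, V ω = g (W ω))
    (f : D → E) (hf : ∀ ω, W ω = f (V ω)) :
    condEnt μ X V = condEnt μ X W :=
  le_antisymm (condEnt_mono_right μ hX hW hV f hf)
    (condEnt_mono_right μ hX hV hW g hg)

lemma condEnt_congr_left {X : Ω → A} {Y : Ω → D} {W : Ω → E}
    (hX : Measurable X) (hY : Measurable Y) (hW : Measurable W)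
    (f : A → D) (hf : ∀ ω, Y ω = f (X ω))
    (g : D → A) (hg : ∀ ω, X ω = g (Y ω)) :
    condEnt μ X W = condEnt μ Y W := by
  unfold condEnt
  have h : shEnt μ (fun ω => (X ω, W ω)) = shEnt μ (fun ω => (Y ω, W ω)) :=
    shEnt_congr μ (hX.prodMk hW) (hY.prodMk hW)
      (fun p : D × E => (g p.1, p.2)) (fun p : A × E => (f p.1, p.2))
      (fun ω => by rw [hg ω]) (fun ω => by rw [hf ω])
  rw [h]

lemma condEnt_chain_s7 {X : Ω → A} {Y : Ω → D} {W : Ω → E}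
    (hX : Measurable X) (hY : Measurable Y) (hW : Measurable W) :
    condEnt μ (fun ω => (X ω, Y ω)) W
      = condEnt μ X (fun ω => (Y ω, W ω)) + condEnt μ Y W := by
  unfold condEnt
  have h : shEnt μ (fun ω => ((X ω, Y ω), W ω))
      = shEnt μ (fun ω => (X ω, (Y ω, W ω))) :=
    shEnt_congr μ ((hX.prodMk hY).prodMk hW) (hX.prodMk (hY.prodMk hW))
      (fun p : A × (D × E) => ((p.1, p.2.1), p.2.2))
      (fun p : (A × D) × E => (p.1.1, (p.1.2, p.2)))
      (fun ω => rfl) (fun ω => rfl)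
  rw [h]
  ring

lemma condEnt_nonneg_s7 {X : Ω → A} {W : Ω → E}
    (hX : Measurable X) (hW : Measurable W) : 0 ≤ condEnt μ X W := by
  have h : shEnt μ W ≤ shEnt μ (fun ω => (X ω, W ω)) := by
    have := shEnt_comp_le μ (hX.prodMk hW) (Prod.snd : A × E → E)
    exact this
  unfold condEnt
  linarith

end CondLemmas

def splitFun {ι : Type*} [DecidableEq ι] {K : ι → Type*} (i : ι)
    (p : K i × ∀ j : {j // j ≠ i}, K j.1) : ∀ j, K j :=
  fun j => if h : j = i then cast (congrArg K h.symm) p.1 else p.2 ⟨j, h⟩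

lemma splitFun_spec {ι : Type*} [DecidableEq ι] {K : ι → Type*} (i : ι)
    (v : ∀ j, K j) : splitFun i (v i, fun j => v j.1) = v := by
  funext j
  unfold splitFun
  split_ifs with h
  · subst h; simp
  · rfl

lemma shEnt_joint_split {ι : Type*} [Fintype ι] [DecidableEq ι] {K : ι → Type*}
    [∀ i, Fintype (K i)] [∀ i, MeasurableSpace (K i)] [∀ i, MeasurableSingletonClass (K i)]
    (X : ∀ i, Ω → K i) (hX : ∀ i, Measurable (X i)) (i : ι) :
    shEnt μ (joint X)
      = shEnt μ (fun ω => (X i ω, joint (fun j : {j // j ≠ i} => X j.1) ω)) := by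
  refine shEnt_congr μ (measurable_pi_lambda _ fun j => hX j)
    ((hX i).prodMk (measurable_pi_lambda _ fun j => hX j.1))
    (splitFun i) (fun v => (v i, fun j => v j.1))
    (fun ω => (splitFun_spec i (joint X ω)).symm) (fun ω => rfl)

lemma shEnt_joint_le_aux (n : ℕ) : ∀ {ι : Type u_4} [Fintype ι] [DecidableEq ι] {K : ι → Type u_5}
    [∀ i, Fintype (K i)] [∀ i, MeasurableSpace (K i)] [∀ i, MeasurableSingletonClass (K i)]
    (X : ∀ i, Ω → K i), (∀ i, Measurable (X i)) → Fintype.card ι ≤ n →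
    shEnt μ (joint X) ≤ ∑ i, shEnt μ (X i) := by
  induction n with
  | zero =>
    intro ι _ _ K _ _ _ X hX hcard
    haveI : IsEmpty ι := Fintype.card_eq_zero_iff.mp (le_antisymm hcard (Nat.zero_le _))
    rw [Finset.univ_eq_empty, Finset.sum_empty]
    exact le_of_eq (shEnt_unique μ _)
  | succ n ih =>
    intro ι _ _ K _ _ _ X hX hcard
    classical
    rcases isEmpty_or_nonempty ι with hemp | hne
    · rw [Finset.univ_eq_empty, Finset.sum_empty]
      exact le_of_eq (shEnt_unique μ _)
    obtain ⟨i⟩ := hne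
    have hJ' : Measurable (joint (fun j : {j // j ≠ i} => X j.1)) :=
      measurable_pi_lambda _ fun j => hX j.1
    have hsplit := shEnt_joint_split μ X hX i
    have hle := shEnt_pair_le μ (hX i) hJ'
    have hcard' : Fintype.card {j // j ≠ i} ≤ n := by
      have : Fintype.card {j // j ≠ i} < Fintype.card ι :=
        Fintype.card_subtype_lt (p := fun j => j ≠ i) (x := i) (by simp)
      omega
    have hIH := ih (fun j : {j // j ≠ i} => X j.1) (fun j => hX j.1) hcard'
    have hsum : ∑ j, shEnt μ (X j)
        = shEnt μ (X i) + ∑ j : {j // j ≠ i}, shEnt μ (X j.1) := by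
      rw [← Finset.sum_erase_add _ _ (Finset.mem_univ i), add_comm]
      congr 1
      exact Finset.sum_subtype _ (by simp) _
    rw [hsum, hsplit]
    calc shEnt μ (fun ω => (X i ω, joint (fun j : {j // j ≠ i} => X j.1) ω))
        ≤ shEnt μ (X i) + shEnt μ (joint (fun j : {j // j ≠ i} => X j.1)) := hle
      _ ≤ shEnt μ (X i) + ∑ j : {j // j ≠ i}, shEnt μ (X j.1) := by linarith

lemma cast_rv {ι : Type*} {K : ι → Type*} (X : ∀ i, Ω → K i) {a b : ι} (h : a = b)
    (ω : Ω) : X a ω = cast (congrArg K h.symm) (X b ω) := by subst h; rfl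

lemma chain_bound_aux (n : ℕ) : ∀ {ι : Type u_4} [Fintype ι] [DecidableEq ι]
    {K : ι → Type u_5}
    [∀ i, Fintype (K i)] [∀ i, MeasurableSpace (K i)] [∀ i, MeasurableSingletonClass (K i)]
    {L : Type u_5} [Fintype L] [MeasurableSpace L] [MeasurableSingletonClass L]
    (X : ∀ i, Ω → K i) (W : Ω → L), (∀ i, Measurable (X i)) → Measurable W →
    Fintype.card ι ≤ n →
    ∑ j, condEnt μ (X j) (fun ω => (joint (fun k : {k // k ≠ j} => X k.1) ω, W ω))
      ≤ condEnt μ (joint X) W := by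
  induction n with
  | zero =>
    intro ι _ _ K _ _ _ L _ _ _ X W hX hW hcard
    haveI : IsEmpty ι := Fintype.card_eq_zero_iff.mp (le_antisymm hcard (Nat.zero_le _))
    rw [Finset.univ_eq_empty, Finset.sum_empty]
    exact condEnt_nonneg_s7 μ (measurable_pi_lambda _ fun j => hX j) hW
  | succ n ih =>
    intro ι _ _ K _ _ _ L _ _ _ X W hX hW hcard
    classical
    rcases isEmpty_or_nonempty ι with hemp | hne
    · rw [Finset.univ_eq_empty, Finset.sum_empty]
      exact condEnt_nonneg_s7 μ (measurable_pi_lambda _ fun j => hX j) hW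
    obtain ⟨i⟩ := hne
    have hJ' : Measurable (joint (fun j : {j // j ≠ i} => X j.1)) :=
      measurable_pi_lambda _ fun j => hX j.1
    have hJ : Measurable (joint X) := measurable_pi_lambda _ fun j => hX j
    -- step 1 : replace joint X by the pair
    have h0 : condEnt μ (joint X) W
        = condEnt μ (fun ω => (X i ω, joint (fun j : {j // j ≠ i} => X j.1) ω)) W :=
      condEnt_congr_left μ hJ ((hX i).prodMk hJ') hW
        (fun v => (v i, fun j => v j.1)) (fun ω => rfl)
        (splitFun i) (fun ω => (splitFun_spec i (joint X ω)).symm)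
    -- step 2 : chain rule
    have h1 := condEnt_chain_s7 μ (hX i) hJ' hW
    -- step 3 : conditioning on more
    have h2 : condEnt μ (joint (fun j : {j // j ≠ i} => X j.1))
          (fun ω => (X i ω, W ω))
        ≤ condEnt μ (joint (fun j : {j // j ≠ i} => X j.1)) W :=
      condEnt_mono_right μ hJ' hW ((hX i).prodMk hW) Prod.snd (fun ω => rfl)
    -- step 4 : induction hypothesis
    have hcard' : Fintype.card {j // j ≠ i} ≤ n := by
      have : Fintype.card {j // j ≠ i} < Fintype.card ι :=
        Fintype.card_subtype_lt (p := fun j => j ≠ i) (x := i) (by simp)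
      omega
    have hIH := ih (fun j : {j // j ≠ i} => X j.1) (fun ω => (X i ω, W ω))
      (fun j => hX j.1) ((hX i).prodMk hW) hcard'
    -- step 5 : identify the summands of hIH with the target summands
    have h4 : ∀ j : {j // j ≠ i},
        condEnt μ (X j.1) (fun ω => (joint (fun k : {k // k ≠ j.1} => X k.1) ω, W ω))
          = condEnt μ (X j.1)
              (fun ω => (joint (fun k : {k : {k // k ≠ i} // k ≠ j} => X k.1.1) ω,
                (X i ω, W ω))) := by
      intro j
      refine condEnt_congr_right μ (hX j.1)
        ((measurable_pi_lambda _ fun k => hX k.1).prodMk hW)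
        ((measurable_pi_lambda _ fun k => hX k.1.1).prodMk ((hX i).prodMk hW))
        (fun p => ((fun k => if h : k.1 = i then cast (congrArg K h.symm) p.2.1
            else p.1 ⟨⟨k.1, h⟩, fun e => k.2 (congrArg Subtype.val e)⟩), p.2.2))
        (fun ω => ?_)
        (fun v => ((fun k => v.1 ⟨k.1.1, fun e => k.2 (Subtype.ext e)⟩),
          (v.1 ⟨i, Ne.symm j.2⟩, v.2)))
        (fun ω => rfl)
      refine Prod.ext ?_ rfl
      funext k
      show X k.1 ω = if h : k.1 = i then cast (congrArg K h.symm) (X i ω)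
        else X (⟨⟨k.1, h⟩, fun e => k.2 (congrArg Subtype.val e)⟩ :
          {k : {k // k ≠ i} // k ≠ j}).1.1 ω
      by_cases h : k.1 = i
      · rw [dif_pos h]
        exact cast_rv X h ω
      · rw [dif_neg h]
    -- assemble
    have hsum : ∑ j, condEnt μ (X j)
          (fun ω => (joint (fun k : {k // k ≠ j} => X k.1) ω, W ω))
        = condEnt μ (X i)
            (fun ω => (joint (fun k : {k // k ≠ i} => X k.1) ω, W ω))
          + ∑ j : {j // j ≠ i}, condEnt μ (X j.1)
              (fun ω => (joint (fun k : {k // k ≠ j.1} => X k.1) ω, W ω)) := by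
      rw [← Finset.sum_erase_add _ _ (Finset.mem_univ i), add_comm]
      congr 1
      exact Finset.sum_subtype _ (by simp) _
    rw [hsum, h0, h1]
    have h5 : ∑ j : {j // j ≠ i}, condEnt μ (X j.1)
          (fun ω => (joint (fun k : {k // k ≠ j.1} => X k.1) ω, W ω))
        ≤ condEnt μ (joint (fun j : {j // j ≠ i} => X j.1)) W := by
      calc ∑ j : {j // j ≠ i}, condEnt μ (X j.1)
            (fun ω => (joint (fun k : {k // k ≠ j.1} => X k.1) ω, W ω))
          = ∑ j : {j // j ≠ i}, condEnt μ (X j.1)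
              (fun ω => (joint (fun k : {k : {k // k ≠ i} // k ≠ j} => X k.1.1) ω,
                (X i ω, W ω))) := Finset.sum_congr rfl fun j _ => h4 j
        _ ≤ condEnt μ (joint (fun j : {j // j ≠ i} => X j.1))
              (fun ω => (X i ω, W ω)) := hIH
        _ ≤ _ := h2
    linarith


end AuxLemmas

/-- Both `TC` and `DTC` lie between `max_i I(Xᵢ ; X_{[n]∖i})` and
`(n−1)·max_i I(Xᵢ ; X_{[n]∖i})`; in particular `DTC ≤ (n−1)·TC` and `TC ≤ (n−1)·DTC`. -/
theorem tc_dtc_between (μ : Measure Ω) [IsProbabilityMeasure μ]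
    {n : ℕ} (hn : 0 < n) {K : Fin n → Type*} [∀ i, Fintype (K i)]
    [∀ i, MeasurableSpace (K i)] [∀ i, MeasurableSingletonClass (K i)]
    (X : ∀ i, Ω → K i) (hX : ∀ i, Measurable (X i)) :
    (⨆ i : Fin n, mutInfo μ (X i) (joint fun j : {j : Fin n // j ≠ i} => X j.1)) ≤ TC μ X ∧
    TC μ X ≤ ((n : ℝ) - 1) *
      ⨆ i : Fin n, mutInfo μ (X i) (joint fun j : {j : Fin n // j ≠ i} => X j.1) ∧
    (⨆ i : Fin n, mutInfo μ (X i) (joint fun j : {j : Fin n // j ≠ i} => X j.1)) ≤ DTC μ X ∧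
    DTC μ X ≤ ((n : ℝ) - 1) *
      ⨆ i : Fin n, mutInfo μ (X i) (joint fun j : {j : Fin n // j ≠ i} => X j.1) ∧
    DTC μ X ≤ ((n : ℝ) - 1) * TC μ X ∧
    TC μ X ≤ ((n : ℝ) - 1) * DTC μ X := by
  classical
  haveI : Nonempty (Fin n) := ⟨⟨0, hn⟩⟩
  set M : Fin n → ℝ :=
    fun i => mutInfo μ (X i) (joint fun j : {j : Fin n // j ≠ i} => X j.1) with hMdef
  set S : ℝ := ⨆ i : Fin n, M i with hSdef
  have hJm : Measurable (joint X) := measurable_pi_lambda _ fun j => hX j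
  have hJim : ∀ i : Fin n, Measurable (joint fun j : {j : Fin n // j ≠ i} => X j.1) :=
    fun i => measurable_pi_lambda _ fun j => hX j.1
  have hsplit : ∀ i : Fin n, shEnt μ (joint X)
      = shEnt μ (fun ω => (X i ω, joint (fun j : {j : Fin n // j ≠ i} => X j.1) ω)) :=
    fun i => shEnt_joint_split μ X hX i
  have hM : ∀ i, M i = shEnt μ (X i)
      + shEnt μ (joint fun j : {j : Fin n // j ≠ i} => X j.1) - shEnt μ (joint X) := by
    intro i
    have hMi : M i = mutInfo μ (X i) (joint fun j : {j : Fin n // j ≠ i} => X j.1) := rfl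
    rw [hMi]
    unfold mutInfo
    rw [← hsplit i]
  have hc : ∀ i, condEnt μ (X i) (joint fun j : {j : Fin n // j ≠ i} => X j.1)
      = shEnt μ (joint X)
        - shEnt μ (joint fun j : {j : Fin n // j ≠ i} => X j.1) := by
    intro i
    unfold condEnt
    rw [← hsplit i]
  have hsumsplit : ∀ (g : Fin n → ℝ) (i : Fin n),
      ∑ j, g j = g i + ∑ j : {j : Fin n // j ≠ i}, g j.1 := by
    intro g i
    rw [← Finset.sum_erase_add _ _ (Finset.mem_univ i), add_comm]
    congr 1
    exact Finset.sum_subtype _ (by simp) _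
  -- claim 1 : M i ≤ TC
  have claim1 : ∀ i, M i ≤ TC μ X := by
    intro i
    have hsub : shEnt μ (joint fun j : {j : Fin n // j ≠ i} => X j.1)
        ≤ ∑ j : {j : Fin n // j ≠ i}, shEnt μ (X j.1) :=
      shEnt_joint_le_aux μ _ _ (fun j => hX j.1) le_rfl
    unfold TC
    rw [hM i, hsumsplit (fun j => shEnt μ (X j)) i]
    linarith
  -- claim 2 : M i ≤ DTC
  have claim2 : ∀ i, M i ≤ DTC μ X := by
    intro i
    have hcb := chain_bound_aux μ _ (fun j : {j : Fin n // j ≠ i} => X j.1) (X i)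
      (fun j => hX j.1) (hX i) le_rfl
    have hRHS : condEnt μ (joint fun j : {j : Fin n // j ≠ i} => X j.1) (X i)
        = shEnt μ (joint X) - shEnt μ (X i) := by
      unfold condEnt
      have : shEnt μ (fun ω => (joint (fun j : {j : Fin n // j ≠ i} => X j.1) ω, X i ω))
          = shEnt μ (joint X) :=
        shEnt_congr μ ((hJim i).prodMk (hX i)) hJm
          (fun v => ((fun k => v k.1), v i)) (fun p => splitFun i (p.2, p.1))
          (fun ω => rfl) (fun ω => (splitFun_spec i (joint X ω)).symm)
      rw [this]
    have h4' : ∀ j : {j : Fin n // j ≠ i},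
        condEnt μ (X j.1)
          (fun ω => (joint (fun k : {k : {j : Fin n // j ≠ i} // k ≠ j} => X k.1.1) ω,
            X i ω))
        = condEnt μ (X j.1) (joint fun k : {k : Fin n // k ≠ j.1} => X k.1) := by
      intro j
      refine (condEnt_congr_right μ (hX j.1) (hJim j.1)
        ((measurable_pi_lambda _
            (fun k : {k : {j : Fin n // j ≠ i} // k ≠ j} => hX k.1.1)).prodMk (hX i))
        (fun p => (fun k : {k : Fin n // k ≠ j.1} =>
            if h : k.1 = i then cast (congrArg K h.symm) p.2
            else p.1 ⟨⟨k.1, h⟩, fun e => k.2 (congrArg Subtype.val e)⟩))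
        (fun ω => ?_)
        (fun v => ((fun k : {k : {j : Fin n // j ≠ i} // k ≠ j} =>
            v ⟨k.1.1, fun e => k.2 (Subtype.ext e)⟩), v ⟨i, Ne.symm j.2⟩))
        (fun ω => rfl)).symm
      funext k
      show X k.1 ω = if h : k.1 = i then cast (congrArg K h.symm) (X i ω)
        else X (⟨⟨k.1, h⟩, fun e => k.2 (congrArg Subtype.val e)⟩ :
          {k : {k : Fin n // k ≠ i} // k ≠ j}).1.1 ω
      by_cases h : k.1 = i
      · rw [dif_pos h]
        exact cast_rv X h ω
      · rw [dif_neg h]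
    rw [Finset.sum_congr rfl (fun j _ => h4' j), hRHS] at hcb
    have hDTC : DTC μ X = shEnt μ (joint X)
        - ∑ j, (shEnt μ (joint X) - shEnt μ (joint fun k : {k : Fin n // k ≠ j} => X k.1)) := by
      unfold DTC
      rw [Finset.sum_congr rfl (fun j _ => hc j)]
    rw [hDTC, hsumsplit
      (fun j => shEnt μ (joint X) - shEnt μ (joint fun k : {k : Fin n // k ≠ j} => X k.1)) i,
      hM i]
    have hsum_le : ∑ j : {j : Fin n // j ≠ i},
        (shEnt μ (joint X) - shEnt μ (joint fun k : {k : Fin n // k ≠ j.1} => X k.1))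
        ≤ shEnt μ (joint X) - shEnt μ (X i) := by
      calc ∑ j : {j : Fin n // j ≠ i},
          (shEnt μ (joint X) - shEnt μ (joint fun k : {k : Fin n // k ≠ j.1} => X k.1))
          = ∑ j : {j : Fin n // j ≠ i},
            condEnt μ (X j.1) (joint fun k : {k : Fin n // k ≠ j.1} => X k.1) := by
            refine Finset.sum_congr rfl fun j _ => ?_
            rw [hc j.1]
        _ ≤ _ := hcb
    linarith
  -- claim 3 : TC + DTC = ∑ M i
  have claim3 : TC μ X + DTC μ X = ∑ i, M i := by
    have h : ∑ i, M i = ∑ i, (shEnt μ (X i)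
        - condEnt μ (X i) (joint fun j : {j : Fin n // j ≠ i} => X j.1)) := by
      refine Finset.sum_congr rfl fun i _ => ?_
      rw [hMdef]
      unfold mutInfo condEnt
      ring
    unfold TC DTC
    rw [h, Finset.sum_sub_distrib]
    ring
  -- final assembly
  have hM_le_S : ∀ i, M i ≤ S :=
    fun i => le_ciSup (Set.finite_range M).bddAbove i
  have hS_le_TC : S ≤ TC μ X := ciSup_le claim1
  have hS_le_DTC : S ≤ DTC μ X := ciSup_le claim2
  have hsumM : ∑ i, M i ≤ (n : ℝ) * S := by
    calc ∑ i, M i ≤ ∑ _i : Fin n, S := Finset.sum_le_sum fun i _ => hM_le_S i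
      _ = (n : ℝ) * S := by
        rw [Finset.sum_const, Finset.card_univ, Fintype.card_fin, nsmul_eq_mul]
  have hTC_le : TC μ X ≤ ((n : ℝ) - 1) * S := by
    have : TC μ X = (∑ i, M i) - DTC μ X := by linarith
    rw [this]
    have := hS_le_DTC
    nlinarith [hsumM]
  have hDTC_le : DTC μ X ≤ ((n : ℝ) - 1) * S := by
    have : DTC μ X = (∑ i, M i) - TC μ X := by linarith
    rw [this]
    nlinarith [hsumM, hS_le_TC]
  have hn1 : (0 : ℝ) ≤ (n : ℝ) - 1 := by
    have : (1 : ℝ) ≤ (n : ℝ) := by exact_mod_cast hn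
    linarith
  refine ⟨hS_le_TC, hTC_le, hS_le_DTC, hDTC_le, ?_, ?_⟩
  · calc DTC μ X ≤ ((n : ℝ) - 1) * S := hDTC_le
      _ ≤ ((n : ℝ) - 1) * TC μ X := mul_le_mul_of_nonneg_left hS_le_TC hn1
  · calc TC μ X ≤ ((n : ℝ) - 1) * S := hTC_le
      _ ≤ ((n : ℝ) - 1) * DTC μ X := mul_le_mul_of_nonneg_left hS_le_DTC hn1

end Corr
end

section
/- For any finite-valued random variables X₁, …, Xₙ and Y on a common probability space, DTC(X₁;…;Xₙ;Y) = I(X₁,…,Xₙ ; Y) + DTC(X₁;…;Xₙ | Y), where DTC(X₁;…;Xₙ;Y) is the dual total correlation of the (n+1)-tuple (X₁,…,Xₙ,Y). -/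
open MeasureTheory Real

namespace Corr

variable {Ω : Type*} [MeasurableSpace Ω]

universe u

/-- The family of target spaces of the `(n+1)`-tuple `(X₁,…,Xₙ,Y)`, indexed by
`Option (Fin n)`: `none` corresponds to `Y` and `some i` to `Xᵢ`. -/
def extFam {n : ℕ} (K : Fin n → Type u) (L : Type u) : Option (Fin n) → Type u
  | none => L
  | some i => K i

instance extFam.fintype {n : ℕ} (K : Fin n → Type u) (L : Type u)
    [∀ i, Fintype (K i)] [Fintype L] : ∀ o, Fintype (extFam K L o)
  | none => inferInstanceAs (Fintype L)
  | some i => inferInstanceAs (Fintype (K i))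

instance extFam.measurableSpace {n : ℕ} (K : Fin n → Type u) (L : Type u)
    [∀ i, MeasurableSpace (K i)] [MeasurableSpace L] : ∀ o, MeasurableSpace (extFam K L o)
  | none => inferInstanceAs (MeasurableSpace L)
  | some i => inferInstanceAs (MeasurableSpace (K i))

instance extFam.measurableSingletonClass {n : ℕ} (K : Fin n → Type u) (L : Type u)
    [∀ i, MeasurableSpace (K i)] [MeasurableSpace L]
    [∀ i, MeasurableSingletonClass (K i)] [MeasurableSingletonClass L] :
    ∀ o, MeasurableSingletonClass (extFam K L o)
  | none => inferInstanceAs (MeasurableSingletonClass L)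
  | some i => inferInstanceAs (MeasurableSingletonClass (K i))

/-- The `(n+1)`-tuple `(X₁,…,Xₙ,Y)` as a family indexed by `Option (Fin n)`. -/
def extTuple {n : ℕ} {K : Fin n → Type u} {L : Type u} {Ω : Type*}
    (X : ∀ i, Ω → K i) (Y : Ω → L) : ∀ o, Ω → extFam K L o
  | none => Y
  | some i => X i

/-! Relabelling a random variable by an injective map does not change its entropy, so the joint
variables of `(X₁,…,Xₙ,Y)` and of its sub-families may be replaced by the corresponding pairs
`(Y, X)` and `(X_{[n]∖i}, Y)`. After that, expanding every conditional entropy as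
`H(A | B) = H(A, B) − H(B)` turns both sides into `H(X) − ∑ᵢ H(Xᵢ | X_{[n]∖i}, Y)`. -/

theorem shEnt_comp_of_injective_s10 {K L : Type*} [Fintype K] [Fintype L] (μ : Measure Ω)
    (X : Ω → K) {g : K → L} (hg : g.Injective) : shEnt μ (g ∘ X) = shEnt μ X := by
  refine (Fintype.sum_of_injective g hg _ _ (fun l hl => ?_) (fun k => ?_)).symm
  · have hempty : g ∘ X ⁻¹' {l} = ∅ :=
      Set.eq_empty_of_forall_notMem fun ω hω => hl ⟨X ω, hω⟩
    simp [hempty]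
  · rw [Set.preimage_comp, ← Set.image_singleton, hg.preimage_image]

theorem condEnt_comp_right_of_injective {K L M : Type*} [Fintype K] [Fintype L] [Fintype M]
    (μ : Measure Ω) (X : Ω → K) (Z : Ω → L) {g : L → M} (hg : g.Injective) :
    condEnt μ X (g ∘ Z) = condEnt μ X Z := by
  rw [condEnt, condEnt, shEnt_comp_of_injective_s10 μ Z hg,
    ← shEnt_comp_of_injective_s10 μ (fun ω => (X ω, Z ω)) (Function.injective_id.prodMap hg)]
  rfl

theorem _root_.Function.Surjective.injective_comp_pi {ι κ : Type*} {K : ι → Type*} {e : κ → ι}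
    (he : e.Surjective) : Function.Injective fun (f : ∀ i, K i) (k : κ) => f (e k) := by
  intro f g hfg
  funext i
  obtain ⟨k, rfl⟩ := he i
  exact congrFun hfg k

theorem injective_restrict_ne_some {n : ℕ} {K : Fin n → Type u} {L : Type u} (i : Fin n) :
    Function.Injective fun f : (∀ j : {j : Option (Fin n) // j ≠ some i}, extFam K L j.1) =>
      ((fun j : {j : Fin n // j ≠ i} => f ⟨some j.1, by simpa using j.2⟩,
        f ⟨none, (Option.some_ne_none i).symm⟩) : (∀ j : {j : Fin n // j ≠ i}, K j.1) × L) := by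
  intro f g hfg
  funext ⟨j, hj⟩
  cases j with
  | none => exact congrArg Prod.snd hfg
  | some k => exact congrFun (congrArg Prod.fst hfg) ⟨k, fun hki => hj (hki ▸ rfl)⟩

section extTuple

variable {n : ℕ} {K : Fin n → Type u} [∀ i, Fintype (K i)] {L : Type u} [Fintype L]
  (μ : Measure Ω) (X : ∀ i, Ω → K i) (Y : Ω → L)

theorem shEnt_joint_extTuple :
    shEnt μ (joint (extTuple X Y)) = shEnt μ (fun ω => (Y ω, joint X ω)) :=
  (shEnt_comp_of_injective_s10 μ _ Equiv.piOptionEquivProd.injective).symm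

theorem condEnt_extTuple_none :
    condEnt μ (extTuple X Y none)
        (joint fun j : {j : Option (Fin n) // j ≠ none} => extTuple X Y j.1) =
      condEnt μ Y (joint X) := by
  have hsurj : Function.Surjective
      fun i : Fin n => (⟨some i, Option.some_ne_none i⟩ : {j : Option (Fin n) // j ≠ none}) := by
    rintro ⟨_ | i, hj⟩
    · exact absurd rfl hj
    · exact ⟨i, rfl⟩
  exact (condEnt_comp_right_of_injective μ Y
    (joint fun j : {j : Option (Fin n) // j ≠ none} => extTuple X Y j.1)
    hsurj.injective_comp_pi).symm

theorem condEnt_extTuple_some (i : Fin n) :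
    condEnt μ (extTuple X Y (some i))
        (joint fun j : {j : Option (Fin n) // j ≠ some i} => extTuple X Y j.1) =
      condEnt μ (X i) (fun ω => (joint (fun j : {j : Fin n // j ≠ i} => X j.1) ω, Y ω)) :=
  (condEnt_comp_right_of_injective μ (X i)
    (joint fun j : {j : Option (Fin n) // j ≠ some i} => extTuple X Y j.1)
    (injective_restrict_ne_some i)).symm

end extTuple

theorem dtc_cons_general (μ : Measure Ω)
    {n : ℕ} {K : Fin n → Type u} [∀ i, Fintype (K i)]
    {L : Type u} [Fintype L]
    (X : ∀ i, Ω → K i)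
    (Y : Ω → L) :
    DTC μ (extTuple X Y) = mutInfo μ (joint X) Y + condDTC μ X Y := by
  rw [DTC, condDTC, mutInfo, Fintype.sum_option, shEnt_joint_extTuple, condEnt_extTuple_none]
  simp only [condEnt_extTuple_some]
  simp only [condEnt]
  ring

/-- For finite-valued `X₁, …, Xₙ` and `Y`,
`DTC(X₁;…;Xₙ;Y) = I(X₁,…,Xₙ ; Y) + DTC(X₁;…;Xₙ | Y)`, where `DTC(X₁;…;Xₙ;Y)` is the dual
total correlation of the `(n+1)`-tuple `(X₁,…,Xₙ,Y)`. -/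
theorem dtc_cons (μ : Measure Ω) [IsProbabilityMeasure μ]
    {n : ℕ} {K : Fin n → Type u} [∀ i, Fintype (K i)]
    [∀ i, MeasurableSpace (K i)] [∀ i, MeasurableSingletonClass (K i)]
    {L : Type u} [Fintype L] [MeasurableSpace L] [MeasurableSingletonClass L]
    (X : ∀ i, Ω → K i) (hX : ∀ i, Measurable (X i))
    (Y : Ω → L) (hY : Measurable Y) :
    DTC μ (extTuple X Y) = mutInfo μ (joint X) Y + condDTC μ X Y :=
  dtc_cons_general μ X Y

end Corr
end

section
/- Let K₁, …, Kₙ be non-empty finite sets, equip ∏_{i=1}^n Kᵢ with the normalized Hamming metric d_n(x,y) := (1/n)·|{i : xᵢ ≠ yᵢ}|, and let μ be a probability measure on ∏ᵢ Kᵢ with marginals μ₁, …, μₙ. Then there exists a coupling λ of μ and the product measure μ₁ × ⋯ × μₙ such that ∫ d_n(x,y) λ(dx,dy) ≤ √( TC(μ) / (2n) ). -/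
open MeasureTheory Real

namespace Corr

variable {Ω : Type*} [MeasurableSpace Ω]

/-- The normalized Hamming distance `d_n(x,y) = |{i : xᵢ ≠ yᵢ}| / n` on `∏ i, K i`. -/
noncomputable def hammingDist {n : ℕ} {K : Fin n → Type*} [∀ i, DecidableEq (K i)]
    (x y : ∀ i, K i) : ℝ :=
  ((Finset.univ.filter fun i => x i ≠ y i).card : ℝ) / n

universe u

lemma log_ge_one_sub_inv {t : ℝ} (ht : 0 < t) : 1 - 1/t ≤ log t := by
  have := Real.log_le_sub_one_of_pos (x := 1/t) (by positivity)
  rw [Real.log_div one_ne_zero (ne_of_gt ht), Real.log_one] at this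
  linarith

noncomputable def psiF (t : ℝ) : ℝ := (t+1) * log t - 2*(t-1)

lemma psi_hasDeriv {t : ℝ} (ht : 0 < t) :
    HasDerivAt psiF (log t + (t+1)/t - 2) t := by
  have h1 : HasDerivAt (fun t : ℝ => (t+1) * log t) (1 * log t + (t+1) * t⁻¹) t := by
    have := ((hasDerivAt_id t).add_const 1).mul (Real.hasDerivAt_log (ne_of_gt ht))
    convert this using 2 <;> [rfl; rfl; simp; simp]
  have h2 : HasDerivAt (fun t : ℝ => 2*(t-1)) 2 t := by
    simpa using ((hasDerivAt_id t).sub_const 1).const_mul 2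
  have := h1.sub h2
  convert this using 1
  rfl; rfl; rfl
  have h3 : (t+1)/t = (t+1) * t⁻¹ := by rw [div_eq_mul_inv]
  rw [h3]
  ring

lemma psi_deriv_nonneg {t : ℝ} (ht : 0 < t) : 0 ≤ log t + (t+1)/t - 2 := by
  have h := log_ge_one_sub_inv ht
  have : (t+1)/t = 1 + 1/t := by field_simp
  rw [this]; linarith

lemma psi_mono : MonotoneOn psiF (Set.Ioi 0) := by
  have hi : interior (Set.Ioi (0:ℝ)) = Set.Ioi 0 := interior_Ioi
  apply monotoneOn_of_deriv_nonneg (convex_Ioi 0)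
  · apply ContinuousOn.sub
    · exact (continuousOn_id.add continuousOn_const).mul
        (Real.continuousOn_log.mono (by intro x hx; simpa using ne_of_gt hx))
    · exact continuousOn_const.mul (continuousOn_id.sub continuousOn_const)
  · rw [hi]; intro x hx
    exact (psi_hasDeriv hx).differentiableAt.differentiableWithinAt
  · rw [hi]; intro x hx
    rw [(psi_hasDeriv hx).deriv]
    exact psi_deriv_nonneg hx

lemma psi_one : psiF 1 = 0 := by simp [psiF]

lemma psi_nonneg {t : ℝ} (ht : 1 ≤ t) : 0 ≤ psiF t := by
  have := psi_mono (Set.mem_Ioi.2 one_pos) (Set.mem_Ioi.2 (lt_of_lt_of_le one_pos ht)) ht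
  rwa [psi_one] at this

lemma psi_nonpos {t : ℝ} (ht0 : 0 < t) (ht : t ≤ 1) : psiF t ≤ 0 := by
  have := psi_mono (Set.mem_Ioi.2 ht0) (Set.mem_Ioi.2 one_pos) ht
  rwa [psi_one] at this

noncomputable def phiF (t : ℝ) : ℝ := 2*(t+2)*(t * log t - t + 1) - 3*(t-1)^2

lemma phi_hasDeriv {t : ℝ} (ht : 0 < t) : HasDerivAt phiF (4 * psiF t) t := by
  have hl : HasDerivAt (fun t : ℝ => t * log t - t + 1) (log t) t := by
    have h1 : HasDerivAt (fun t : ℝ => t * log t) (1 * log t + t * t⁻¹) t :=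
      (hasDerivAt_id t).mul (Real.hasDerivAt_log (ne_of_gt ht))
    have := (h1.sub (hasDerivAt_id t)).add_const 1
    convert this using 1
    rfl; rfl; rfl
    field_simp
    ring
  have h2 : HasDerivAt (fun t : ℝ => 2*(t+2)) 2 t := by
    simpa using ((hasDerivAt_id t).add_const 2).const_mul 2
  have hm : HasDerivAt (fun t : ℝ => 2*(t+2)*(t * log t - t + 1))
      (2 * (t * log t - t + 1) + 2*(t+2) * log t) t := h2.mul hl
  have hsq : HasDerivAt (fun t : ℝ => 3*(t-1)^2) (3*(2*(t-1))) t := by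
    have := (((hasDerivAt_id t).sub_const 1).pow 2).const_mul 3
    simpa using this
  have := hm.sub hsq
  convert this using 1
  rfl; rfl; rfl
  simp only [psiF]
  ring

lemma phi_one : phiF 1 = 0 := by simp [phiF]

lemma phi_nonneg {t : ℝ} (ht : 0 ≤ t) : 0 ≤ phiF t := by
  rcases eq_or_lt_of_le ht with h | ht0
  · simp [phiF, ← h]
    norm_num
  rcases le_total t 1 with h1 | h1
  · -- antitone on Ioc 0 1? use Icc t 1 within Ioi 0... use antitoneOn on Set.Ioc 0 1
    have hint : interior (Set.Ioc (0:ℝ) 1) = Set.Ioo 0 1 := interior_Ioc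
    have hanti : AntitoneOn phiF (Set.Ioc 0 1) := by
      apply antitoneOn_of_deriv_nonpos (convex_Ioc 0 1)
      · apply ContinuousOn.sub
        · apply ContinuousOn.mul
          · fun_prop
          · apply ContinuousOn.add (ContinuousOn.sub (ContinuousOn.mul continuousOn_id
              (Real.continuousOn_log.mono ?_)) continuousOn_id) continuousOn_const
            intro x hx; simpa using ne_of_gt hx.1
        · fun_prop
      · rw [hint]; intro x hx
        exact (phi_hasDeriv hx.1).differentiableAt.differentiableWithinAt
      · rw [hint]; intro x hx
        rw [(phi_hasDeriv hx.1).deriv]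
        have := psi_nonpos hx.1 (le_of_lt hx.2)
        linarith
    have := hanti (Set.mem_Ioc.2 ⟨ht0, h1⟩) (Set.mem_Ioc.2 ⟨one_pos, le_refl 1⟩) h1
    rwa [phi_one] at this
  · have hint : interior (Set.Ici (1:ℝ)) = Set.Ioi 1 := interior_Ici
    have hmono : MonotoneOn phiF (Set.Ici 1) := by
      apply monotoneOn_of_deriv_nonneg (convex_Ici 1)
      · apply ContinuousOn.sub
        · apply ContinuousOn.mul
          · fun_prop
          · apply ContinuousOn.add (ContinuousOn.sub (ContinuousOn.mul continuousOn_id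
              (Real.continuousOn_log.mono ?_)) continuousOn_id) continuousOn_const
            intro x hx
            simp only [Set.mem_Ici] at hx
            simp only [Set.mem_compl_iff, Set.mem_singleton_iff]
            intro h; rw [h] at hx; linarith
        · fun_prop
      · rw [hint]; intro x hx
        exact (phi_hasDeriv (lt_trans one_pos hx)).differentiableAt.differentiableWithinAt
      · rw [hint]; intro x hx
        rw [(phi_hasDeriv (lt_trans one_pos hx)).deriv]
        have := psi_nonneg (le_of_lt hx)
        linarith
    have := hmono (Set.mem_Ici.2 (le_refl 1)) (Set.mem_Ici.2 h1) h1
    rwa [phi_one] at this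

/-- key pointwise inequality: `3(x-y)² ≤ 2(x+2y)(x log(x/y) - x + y)` for `x ≥ 0, y > 0`. -/
lemma pointwise_kl {x y : ℝ} (hx : 0 ≤ x) (hy : 0 < y) :
    3*(x-y)^2 ≤ 2*(x+2*y)*(x * log (x/y) - x + y) := by
  set t := x / y with htdef
  have hx' : x = t * y := by rw [htdef, div_mul_cancel₀ x hy.ne']
  have ht : 0 ≤ t := div_nonneg hx hy.le
  have key := phi_nonneg ht
  simp only [phiF] at key
  have hlog : log (x/y) = log t := rfl
  have expand : 2*(x+2*y)*(x * log (x/y) - x + y) - 3*(x-y)^2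
      = y^2 * (2*(t+2)*(t * log t - t + 1) - 3*(t-1)^2) := by
    rw [hlog, hx']
    ring
  nlinarith [sq_nonneg y, mul_nonneg (mul_pos hy hy).le key]


lemma klterm_nonneg {x y : ℝ} (hx : 0 ≤ x) (hy : 0 ≤ y) (habs : y = 0 → x = 0) :
    0 ≤ x * log (x/y) - x + y := by
  rcases eq_or_lt_of_le hy with h | h
  · rw [habs h.symm, ← h]; simp
  · have h1 := pointwise_kl hx h
    nlinarith [sq_nonneg (x - y)]

lemma kl_nonneg {B : Type*} [Fintype B] (u v : B → ℝ) (hu : ∀ b, 0 ≤ u b)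
    (hv : ∀ b, 0 ≤ v b) (hsu : ∑ b, u b = 1) (hsv : ∑ b, v b = 1)
    (habs : ∀ b, v b = 0 → u b = 0) :
    0 ≤ ∑ b, u b * log (u b / v b) := by
  have : ∑ b, u b * log (u b / v b) = ∑ b, (u b * log (u b / v b) - u b + v b) := by
    rw [Finset.sum_add_distrib, Finset.sum_sub_distrib, hsu, hsv]; ring
  rw [this]
  exact Finset.sum_nonneg fun b _ => klterm_nonneg (hu b) (hv b) (habs b)

/-- Pinsker: `∑ |u - v| ≤ √(2 KL(u‖v))`. -/
lemma pinsker {B : Type*} [Fintype B] (u v : B → ℝ) (hu : ∀ b, 0 ≤ u b)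
    (hv : ∀ b, 0 ≤ v b) (hsu : ∑ b, u b = 1) (hsv : ∑ b, v b = 1)
    (habs : ∀ b, v b = 0 → u b = 0) :
    ∑ b, |u b - v b| ≤ Real.sqrt (2 * ∑ b, u b * log (u b / v b)) := by
  set KL := ∑ b, u b * log (u b / v b) with hKL
  have hKL0 : 0 ≤ KL := kl_nonneg u v hu hv hsu hsv habs
  have key : (∑ b, |u b - v b|)^2 ≤ 2 * KL := by
    have cs := Finset.sum_sq_le_sum_mul_sum_of_sq_eq_mul (Finset.univ (α := B))
      (r := fun b => |u b - v b|) (f := fun b => (2*u b + 4*v b)/3)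
      (g := fun b => 3*(u b - v b)^2 / (2*u b + 4*v b))
      (fun b _ => by have := hu b; have := hv b; positivity)
      (fun b _ => by have := hu b; have := hv b; positivity)
      (fun b _ => by
        rcases eq_or_lt_of_le (by have := hu b; have := hv b; positivity :
            (0:ℝ) ≤ 2*u b + 4*v b) with h | h
        · have hub : u b = 0 := by nlinarith [hu b, hv b]
          have hvb : v b = 0 := by nlinarith [hu b, hv b]
          simp [hub, hvb]
        · rw [sq_abs, div_mul_div_comm, mul_comm (2*u b+4*v b), mul_div_mul_right _ _ h.ne']
          ring)
    have hf : ∑ b, (2*u b + 4*v b)/3 = 2 := by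
      rw [← Finset.sum_div, Finset.sum_add_distrib, ← Finset.mul_sum, ← Finset.mul_sum,
        hsu, hsv]
      norm_num
    have hg : ∑ b, 3*(u b - v b)^2 / (2*u b + 4*v b) ≤ KL := by
      have hrw : KL = ∑ b, (u b * log (u b / v b) - u b + v b) := by
        rw [hKL, Finset.sum_add_distrib, Finset.sum_sub_distrib, hsu, hsv]; ring
      rw [hrw]
      apply Finset.sum_le_sum
      intro b _
      rcases eq_or_lt_of_le (hv b) with h | h
      · rw [habs b h.symm, ← h]; simp
      · rw [div_le_iff₀ (by have := hu b; positivity)]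
        calc 3*(u b - v b)^2 ≤ 2*(u b+2*v b)*(u b * log (u b/v b) - u b + v b) :=
              pointwise_kl (hu b) h
          _ = (u b * log (u b / v b) - u b + v b) * (2*u b + 4*v b) := by ring
    rw [hf] at cs
    linarith
  have habs0 : 0 ≤ ∑ b, |u b - v b| := Finset.sum_nonneg fun b _ => abs_nonneg _
  exact (Real.le_sqrt habs0 (by linarith)).2 key

/-- Maximal coupling with off-diagonal mass at most total variation. -/
lemma maximal_coupling {B : Type*} [Fintype B] [DecidableEq B] (u v : B → ℝ)
    (hu : ∀ b, 0 ≤ u b) (hv : ∀ b, 0 ≤ v b) (hsu : ∑ b, u b = 1) (hsv : ∑ b, v b = 1) :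
    ∃ c : B × B → ℝ, (∀ z, 0 ≤ c z) ∧ (∀ b, ∑ b', c (b, b') = u b) ∧
      (∀ b', ∑ b, c (b, b') = v b') ∧
      ∑ z : B × B, (if z.1 = z.2 then 0 else c z) ≤ (∑ b, |u b - v b|)/2 := by
  classical
  set m : B → ℝ := fun b => min (u b) (v b) with hm
  set s : ℝ := 1 - ∑ b, m b with hs
  have hmu : ∀ b, m b ≤ u b := fun b => min_le_left _ _
  have hmv : ∀ b, m b ≤ v b := fun b => min_le_right _ _
  have hm0 : ∀ b, 0 ≤ m b := fun b => le_min (hu b) (hv b)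
  have hsum_u : ∑ b, (u b - m b) = s := by rw [hs, Finset.sum_sub_distrib, hsu]
  have hsum_v : ∑ b, (v b - m b) = s := by rw [hs, Finset.sum_sub_distrib, hsv]
  have hs0 : 0 ≤ s := by
    rw [← hsum_u]; exact Finset.sum_nonneg fun b _ => by linarith [hmu b]
  have htv : ∑ b, |u b - v b| = 2 * s := by
    have hab : ∀ b, |u b - v b| = u b + v b - 2 * m b := by
      intro b
      rcases le_total (u b) (v b) with h | h
      · have hmb : m b = u b := min_eq_left h
        rw [abs_of_nonpos (by linarith), hmb]; ring
      · have hmb : m b = v b := min_eq_right h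
        rw [abs_of_nonneg (by linarith), hmb]; ring
    rw [Finset.sum_congr rfl (fun b _ => hab b)]
    rw [Finset.sum_sub_distrib, Finset.sum_add_distrib, hsu, hsv, ← Finset.mul_sum, hs]
    ring
  refine ⟨fun z => (if z.1 = z.2 then m z.1 else 0) + (u z.1 - m z.1) * (v z.2 - m z.2) / s,
    ?_, ?_, ?_, ?_⟩
  · intro z
    have h4 : 0 ≤ (u z.1 - m z.1) * (v z.2 - m z.2) / s := by
      apply div_nonneg (mul_nonneg (by linarith [hmu z.1]) (by linarith [hmv z.2])) hs0
    simp only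
    split <;> [linarith [hm0 z.1]; linarith]
  · intro b
    rw [Finset.sum_add_distrib]
    have h1 : ∑ b', (if b = b' then m b else 0) = m b := by simp
    have h2 : ∑ b', (u b - m b) * (v b' - m b') / s = (u b - m b) * (s / s) := by
      rw [← Finset.sum_div, ← Finset.mul_sum, hsum_v, mul_div_assoc]
    rw [h1, h2]
    rcases eq_or_lt_of_le hs0 with h | h
    · have hz : u b - m b = 0 := by
        have h3 := Finset.sum_eq_zero_iff_of_nonneg
          (fun b _ => by linarith [hmu b] : ∀ b ∈ Finset.univ, (0:ℝ) ≤ u b - m b)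
        rw [hsum_u, ← h] at h3
        have := (h3.1 rfl) b (Finset.mem_univ b)
        linarith
      rw [hz]
      simp
      linarith [hz]
    · rw [div_self (ne_of_gt h)]; ring
  · intro b'
    rw [Finset.sum_add_distrib]
    have h1 : ∑ b, (if b = b' then m b else 0) = m b' := by
      rw [Finset.sum_ite_eq' Finset.univ b' m]; simp
    have h2 : ∑ b, (u b - m b) * (v b' - m b') / s = s / s * (v b' - m b') := by
      rw [← Finset.sum_div, ← Finset.sum_mul, hsum_u]
      ring
    rw [h1, h2]
    rcases eq_or_lt_of_le hs0 with h | h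
    · have hz : v b' - m b' = 0 := by
        have h3 := Finset.sum_eq_zero_iff_of_nonneg
          (fun b _ => by linarith [hmv b] : ∀ b ∈ Finset.univ, (0:ℝ) ≤ v b - m b)
        rw [hsum_v, ← h] at h3
        have := (h3.1 rfl) b' (Finset.mem_univ b')
        linarith
      rw [hz]
      simp
      linarith [hz]
    · rw [div_self (ne_of_gt h)]; ring
  · rw [htv]
    have hb : ∀ z : B × B, (if z.1 = z.2 then (0:ℝ) else
        (if z.1 = z.2 then m z.1 else 0) + (u z.1 - m z.1) * (v z.2 - m z.2) / s)
        ≤ (u z.1 - m z.1) * (v z.2 - m z.2) / s := by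
      intro z
      split
      · apply div_nonneg (mul_nonneg (by linarith [hmu z.1]) (by linarith [hmv z.2])) hs0
      · simp
    calc ∑ z : B × B, (if z.1 = z.2 then (0:ℝ) else
          (if z.1 = z.2 then m z.1 else 0) + (u z.1 - m z.1) * (v z.2 - m z.2) / s)
        ≤ ∑ z : B × B, (u z.1 - m z.1) * (v z.2 - m z.2) / s :=
          Finset.sum_le_sum fun z _ => hb z
      _ = s * s / s := by
          rw [Fintype.sum_prod_type]
          have h1 : ∀ b : B, ∑ b', (u b - m b) * (v b' - m b') / s
              = (u b - m b) * s / s := by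
            intro b; rw [← Finset.sum_div, ← Finset.mul_sum, hsum_v]
          rw [Finset.sum_congr rfl (fun b _ => h1 b)]
          simp_rw [mul_div_assoc]
          rw [← Finset.sum_mul, hsum_u, ← mul_div_assoc]
      _ ≤ s := by
          rcases eq_or_lt_of_le hs0 with h | h
          · rw [← h]; simp
          · rw [mul_div_assoc, div_self (ne_of_gt h), mul_one]
      _ = 2 * s / 2 := by ring


noncomputable def entOf {α : Type*} [Fintype α] (p : α → ℝ) : ℝ :=
  ∑ a, Real.negMulLog (p a)

noncomputable def margA {A B : Type*} [Fintype B] (q : B × A → ℝ) : A → ℝ :=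
  fun a => ∑ b, q (b, a)

noncomputable def margB {A B : Type*} [Fintype A] (q : B × A → ℝ) : B → ℝ :=
  fun b => ∑ a, q (b, a)

/-- Coupling with a maximally-coupled extra coordinate. -/
lemma step {A B : Type*} [Fintype A] [Fintype B] [DecidableEq A] [DecidableEq B]
    (q : B × A → ℝ) (hq0 : ∀ z, 0 ≤ q z) (hq1 : ∑ z, q z = 1)
    (w : A × A → ℝ) (hw0 : ∀ z, 0 ≤ w z) (hrow : ∀ a, ∑ a', w (a, a') = margA q a)
    (r : A → ℝ) (hcol : ∀ a', ∑ a, w (a, a') = r a') :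
    ∃ W : (B × A) × (B × A) → ℝ,
      (∀ z, 0 ≤ W z) ∧
      (∀ z, ∑ z', W (z, z') = q z) ∧
      (∀ z', ∑ z, W (z, z') = margB q z'.1 * r z'.2) ∧
      (∀ a a', ∑ b, ∑ b', W ((b, a), (b', a')) = w (a, a')) ∧
      (0 ≤ entOf (margB q) + entOf (margA q) - entOf q) ∧
      (∑ z : (B × A) × (B × A), (if z.1.1 = z.2.1 then 0 else W z))
        ≤ Real.sqrt ((entOf (margB q) + entOf (margA q) - entOf q) / 2) := by
  classical
  set mA := margA q with hmA
  set mB := margB q with hmB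
  have hmA0 : ∀ a, 0 ≤ mA a := fun a => Finset.sum_nonneg fun b _ => hq0 _
  have hmB0 : ∀ b, 0 ≤ mB b := fun b => Finset.sum_nonneg fun a _ => hq0 _
  have hsum_mA : ∑ a, mA a = 1 := by
    rw [hmA]; rw [← hq1, Fintype.sum_prod_type]
    rw [Finset.sum_comm]
    rfl
  have hsum_mB : ∑ b, mB b = 1 := by
    rw [hmB]; rw [← hq1, Fintype.sum_prod_type]
    rfl
  have hq_of_mA : ∀ a, mA a = 0 → ∀ b, q (b, a) = 0 := by
    intro a ha b
    have := Finset.sum_eq_zero_iff_of_nonneg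
      (fun b _ => hq0 (b, a) : ∀ b ∈ Finset.univ, (0:ℝ) ≤ q (b, a))
    exact (this.1 ha) b (Finset.mem_univ b)
  have hq_of_mB : ∀ b, mB b = 0 → ∀ a, q (b, a) = 0 := by
    intro b hb a
    have := Finset.sum_eq_zero_iff_of_nonneg
      (fun a _ => hq0 (b, a) : ∀ a ∈ Finset.univ, (0:ℝ) ≤ q (b, a))
    exact (this.1 hb) a (Finset.mem_univ a)
  -- conditional distribution of B given a
  set u : A → B → ℝ := fun a b => if mA a = 0 then mB b else q (b, a) / mA a with hu
  have hu0 : ∀ a b, 0 ≤ u a b := by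
    intro a b; rw [hu]; dsimp only
    split
    · exact hmB0 b
    · exact div_nonneg (hq0 _) (hmA0 a)
  have hu1 : ∀ a, ∑ b, u a b = 1 := by
    intro a; rw [hu]; dsimp only
    split
    · exact hsum_mB
    · rename_i h
      rw [← Finset.sum_div]
      rw [show ∑ b, q (b, a) = mA a from rfl]
      exact div_self h
  have huabs : ∀ a b, mB b = 0 → u a b = 0 := by
    intro a b hb; rw [hu]; dsimp only
    split
    · exact hb
    · rw [hq_of_mB b hb a]; simp
  -- KL of the conditional
  set KL : A → ℝ := fun a => ∑ b, u a b * log (u a b / mB b) with hKL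
  have hKL0 : ∀ a, 0 ≤ KL a := fun a =>
    kl_nonneg (u a) mB (hu0 a) hmB0 (hu1 a) hsum_mB (huabs a)
  -- per-a couplings
  have hc : ∀ a, ∃ c : B × B → ℝ, (∀ z, 0 ≤ c z) ∧ (∀ b, ∑ b', c (b, b') = u a b) ∧
      (∀ b', ∑ b, c (b, b') = mB b') ∧
      ∑ z : B × B, (if z.1 = z.2 then 0 else c z) ≤ Real.sqrt (KL a / 2) := by
    intro a
    obtain ⟨c, hc0, hcrow, hccol, hcoff⟩ :=
      maximal_coupling (u a) mB (hu0 a) hmB0 (hu1 a) hsum_mB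
    refine ⟨c, hc0, hcrow, hccol, le_trans hcoff ?_⟩
    have hp := pinsker (u a) mB (hu0 a) hmB0 (hu1 a) hsum_mB (huabs a)
    have h2 : Real.sqrt (2 * KL a) / 2 = Real.sqrt (KL a / 2) := by
      rw [show KL a / 2 = 2 * KL a / 4 by ring, Real.sqrt_div' _ (by norm_num : (0:ℝ) ≤ 4)]
      rw [show Real.sqrt 4 = 2 by
        rw [show (4:ℝ) = 2^2 by norm_num, Real.sqrt_sq (by norm_num)]]
    rw [← h2]
    linarith [hp]
  choose c hc0 hcrow hccol hcoff using hc
  have hcsum : ∀ a, ∑ z : B × B, c a z = 1 := by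
    intro a
    rw [Fintype.sum_prod_type]
    rw [Finset.sum_congr rfl (fun b _ => hcrow a b)]
    exact hu1 a
  refine ⟨fun z => w (z.1.2, z.2.2) * c z.1.2 (z.1.1, z.2.1), ?_, ?_, ?_, ?_, ?_⟩
  · intro z; exact mul_nonneg (hw0 _) (hc0 _ _)
  · rintro ⟨b, a⟩
    rw [Fintype.sum_prod_type]
    dsimp only
    have h1 : ∀ b' : B, ∑ a' : A, w (a, a') * c a (b, b') = mA a * c a (b, b') := by
      intro b'
      rw [← Finset.sum_mul, hrow a]
    rw [Finset.sum_congr rfl (fun b' _ => h1 b')]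
    rw [← Finset.mul_sum, hcrow a b]
    rw [hu]; dsimp only
    split
    · rename_i h
      rw [h, hq_of_mA a h b]; simp
    · rename_i h
      field_simp
  · rintro ⟨b', a'⟩
    rw [Fintype.sum_prod_type]
    dsimp only
    have h1 : ∀ a : A, ∑ b : B, w (a, a') * c a (b, b') = w (a, a') * mB b' := by
      intro a
      rw [← Finset.mul_sum, hccol a b']
    rw [Finset.sum_comm]
    rw [Finset.sum_congr rfl (fun a _ => h1 a)]
    rw [← Finset.sum_mul, hcol a']
    ring
  · intro a a'
    have : ∀ b : B, ∑ b' : B, w (a, a') * c a (b, b') = w (a, a') * (∑ b', c a (b, b')) := by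
      intro b; rw [Finset.mul_sum]
    rw [Finset.sum_congr rfl (fun b _ => this b)]
    rw [← Finset.mul_sum]
    rw [Finset.sum_congr rfl (fun b _ => hcrow a b), hu1 a, mul_one]
  · -- the off-diagonal bound
    set I : ℝ := entOf mB + entOf mA - entOf q with hI
    -- rewrite LHS
    have keyeq : (∑ z : (B × A) × (B × A),
        (if z.1.1 = z.2.1 then (0:ℝ) else w (z.1.2, z.2.2) * c z.1.2 (z.1.1, z.2.1)))
        = ∑ a : A, mA a * (∑ y : B × B, (if y.1 = y.2 then (0:ℝ) else c a y)) := by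
      rw [Fintype.sum_prod_type]
      have h1 : ∀ x : B × A, (∑ y : B × A,
          (if x.1 = y.1 then (0:ℝ) else w (x.2, y.2) * c x.2 (x.1, y.1)))
          = mA x.2 * ∑ b' : B, (if x.1 = b' then (0:ℝ) else c x.2 (x.1, b')) := by
        intro x
        rw [Fintype.sum_prod_type]
        have h2 : ∀ b' : B, (∑ a' : A, (if x.1 = b' then (0:ℝ) else w (x.2, a') * c x.2 (x.1, b')))
            = mA x.2 * (if x.1 = b' then (0:ℝ) else c x.2 (x.1, b')) := by
          intro b'
          split
          · simp
          · rw [← Finset.sum_mul, hrow x.2]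
        rw [Finset.sum_congr rfl (fun b' _ => h2 b'), ← Finset.mul_sum]
      rw [Finset.sum_congr rfl (fun x _ => h1 x)]
      rw [Fintype.sum_prod_type]
      dsimp only
      rw [Finset.sum_comm]
      refine Finset.sum_congr rfl fun a _ => ?_
      rw [← Finset.mul_sum, Fintype.sum_prod_type]
    rw [keyeq]
    -- bound each term by `mA a * √(KL a / 2)`
    have hstep1 : ∑ a : A, mA a * (∑ y : B × B, (if y.1 = y.2 then (0:ℝ) else c a y))
        ≤ ∑ a : A, mA a * Real.sqrt (KL a / 2) :=
      Finset.sum_le_sum fun a _ => mul_le_mul_of_nonneg_left (hcoff a) (hmA0 a)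
    -- Cauchy-Schwarz / Jensen
    have hcs : (∑ a : A, mA a * Real.sqrt (KL a / 2))^2
        ≤ ∑ a : A, mA a * (KL a / 2) := by
      have := Finset.sum_sq_le_sum_mul_sum_of_sq_eq_mul (Finset.univ (α := A))
        (r := fun a => mA a * Real.sqrt (KL a / 2)) (f := fun a => mA a)
        (g := fun a => mA a * (KL a / 2))
        (fun a _ => hmA0 a)
        (fun a _ => mul_nonneg (hmA0 a) (by linarith [hKL0 a]))
        (fun a _ => by
          have hs : Real.sqrt (KL a / 2) ^ 2 = KL a / 2 :=
            Real.sq_sqrt (by linarith [hKL0 a])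
          rw [mul_pow, hs]; ring)
      rw [hsum_mA, one_mul] at this
      exact this
    -- mutual information identity
    have hMI : ∑ a : A, mA a * KL a = I := by
      have hpt : ∀ a b, mA a * (u a b * log (u a b / mB b))
          = q (b, a) * log (q (b, a)) - q (b, a) * log (mB b) - q (b, a) * log (mA a) := by
        intro a b
        rcases eq_or_lt_of_le (hq0 (b, a)) with hq | hq
        · have hq' : q (b, a) = 0 := hq.symm
          rw [hq']
          rcases eq_or_ne (mA a) 0 with h | h
          · rw [h]; ring
          · have hub : u a b = 0 := by
              rw [hu]; dsimp only; rw [if_neg h, hq']; simp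
            rw [hub]; simp
        · have hmAa : 0 < mA a := by
            calc (0:ℝ) < q (b, a) := hq
              _ ≤ mA a := Finset.single_le_sum (fun b _ => hq0 (b, a)) (Finset.mem_univ b)
          have hmBb : 0 < mB b := by
            calc (0:ℝ) < q (b, a) := hq
              _ ≤ mB b := Finset.single_le_sum (fun a _ => hq0 (b, a)) (Finset.mem_univ a)
          have hub : u a b = q (b, a) / mA a := by
            rw [hu]; dsimp only; rw [if_neg (ne_of_gt hmAa)]
          rw [hub]
          have h1 : mA a * (q (b, a) / mA a * log (q (b, a) / mA a / mB b))
              = q (b, a) * log (q (b, a) / mA a / mB b) := by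
            field_simp
          rw [h1]
          rw [Real.log_div (by positivity) (ne_of_gt hmBb),
            Real.log_div (ne_of_gt hq) (ne_of_gt hmAa)]
          ring
      have hexp : ∀ a, mA a * KL a
          = ∑ b, (q (b, a) * log (q (b, a)) - q (b, a) * log (mB b) - q (b, a) * log (mA a)) := by
        intro a
        rw [hKL]; dsimp only
        rw [Finset.mul_sum]
        exact Finset.sum_congr rfl fun b _ => hpt a b
      rw [Finset.sum_congr rfl (fun a _ => hexp a)]
      have hsplit : ∑ a : A, ∑ b : B,
          (q (b, a) * log (q (b, a)) - q (b, a) * log (mB b) - q (b, a) * log (mA a))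
          = (∑ a : A, ∑ b : B, q (b, a) * log (q (b, a)))
            - (∑ a : A, ∑ b : B, q (b, a) * log (mB b))
            - (∑ a : A, ∑ b : B, q (b, a) * log (mA a)) := by
        rw [← Finset.sum_sub_distrib, ← Finset.sum_sub_distrib]
        exact Finset.sum_congr rfl fun a _ => by
          rw [← Finset.sum_sub_distrib, ← Finset.sum_sub_distrib]
      rw [hsplit]
      have e1 : ∑ a : A, ∑ b : B, q (b, a) * log (q (b, a)) = -entOf q := by
        rw [entOf, Fintype.sum_prod_type, Finset.sum_comm]
        rw [← Finset.sum_neg_distrib]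
        refine Finset.sum_congr rfl fun a _ => ?_
        rw [← Finset.sum_neg_distrib]
        refine Finset.sum_congr rfl fun b _ => ?_
        rw [Real.negMulLog]; ring
      have e2 : ∑ a : A, ∑ b : B, q (b, a) * log (mB b) = -entOf mB := by
        rw [Finset.sum_comm]
        rw [entOf, ← Finset.sum_neg_distrib]
        refine Finset.sum_congr rfl fun b _ => ?_
        rw [← Finset.sum_mul]
        rw [show ∑ a, q (b, a) = mB b from rfl]
        rw [Real.negMulLog]; ring
      have e3 : ∑ a : A, ∑ b : B, q (b, a) * log (mA a) = -entOf mA := by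
        rw [entOf, ← Finset.sum_neg_distrib]
        refine Finset.sum_congr rfl fun a _ => ?_
        rw [← Finset.sum_mul]
        rw [show ∑ b, q (b, a) = mA a from rfl]
        rw [Real.negMulLog]; ring
      rw [e1, e2, e3, hI]
      ring
    -- conclude
    refine ⟨?_, ?_⟩
    · rw [← hMI]
      exact Finset.sum_nonneg fun a _ => mul_nonneg (hmA0 a) (hKL0 a)
    have hnn : (0:ℝ) ≤ ∑ a : A, mA a * Real.sqrt (KL a / 2) :=
      Finset.sum_nonneg fun a _ => mul_nonneg (hmA0 a) (Real.sqrt_nonneg _)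
    have hI2 : ∑ a : A, mA a * (KL a / 2) = I / 2 := by
      rw [← hMI, Finset.sum_div]
      exact Finset.sum_congr rfl fun a _ => by ring
    refine le_trans hstep1 ?_
    have hInn : 0 ≤ I / 2 := by
      rw [← hI2]
      exact Finset.sum_nonneg fun a _ => mul_nonneg (hmA0 a) (by linarith [hKL0 a])
    refine (Real.le_sqrt hnn hInn).2 ?_
    rw [← hI2]
    exact hcs


noncomputable def marg {n : ℕ} {K : Fin n → Type*} [∀ i, Fintype (K i)]
    [∀ i, DecidableEq (K i)] (i : Fin n) (p : (∀ j, K j) → ℝ) : K i → ℝ :=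
  fun k => ∑ x : ∀ j, K j, if x i = k then p x else 0

/-- The core coupling lemma, by induction on the number of coordinates. -/
lemma core (n : ℕ) : ∀ (K : Fin n → Type u) (_ : ∀ i, Fintype (K i))
    (_ : ∀ i, DecidableEq (K i)) (p : (∀ i, K i) → ℝ),
    (∀ x, 0 ≤ p x) → (∑ x, p x = 1) →
    ∃ (w : ((∀ i, K i) × (∀ i, K i)) → ℝ) (cvec : Fin n → ℝ),
      (∀ z, 0 ≤ w z) ∧
      (∀ x, ∑ y, w (x, y) = p x) ∧
      (∀ y, ∑ x, w (x, y) = ∏ i, marg i p (y i)) ∧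
      (∀ i, 0 ≤ cvec i) ∧
      (∑ i, cvec i = (∑ i, entOf (marg i p)) - entOf p) ∧
      (∑ z : (∀ i, K i) × (∀ i, K i),
          w z * (∑ i, if z.1 i = z.2 i then (0:ℝ) else 1)) ≤
        ∑ i, Real.sqrt (cvec i / 2) := by
  induction n with
  | zero =>
    intro K _ _ p hp0 hp1
    have huniq : ∀ x y : (∀ i, K i), x = y := fun x y => funext fun i => i.elim0
    have hpd : ∀ x, p x = 1 := by
      intro x
      rw [← hp1]
      rw [show (Finset.univ : Finset (∀ i, K i)) = {x} from
        Finset.eq_singleton_iff_unique_mem.2 ⟨Finset.mem_univ x,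
          fun y _ => (huniq y x)⟩]
      simp
    refine ⟨fun z => p z.1, Fin.elim0, fun z => hp0 z.1, ?_, ?_, fun i => i.elim0, ?_, ?_⟩
    · intro x
      rw [show (Finset.univ : Finset (∀ i, K i)) = {x} from
        Finset.eq_singleton_iff_unique_mem.2 ⟨Finset.mem_univ x, fun y _ => (huniq y x)⟩]
      simp
    · intro y
      rw [hp1]
      simp
    · simp only [Finset.univ_eq_empty, Finset.sum_empty]
      rw [show entOf p = 0 from ?_]
      · ring
      · rw [entOf]
        refine Finset.sum_eq_zero fun x _ => ?_
        rw [hpd x]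
        simp
    · simp
  | succ n ih =>
    intro K instF instD p hp0 hp1
    set B := K 0 with hB
    set K' : Fin n → Type u := fun i => K i.succ with hK'
    set A := ∀ i, K' i with hA
    set e : B × A ≃ (∀ i, K i) := Fin.consEquiv K with he
    set q : B × A → ℝ := fun z => p (e z) with hq
    have hq0 : ∀ z, 0 ≤ q z := fun z => hp0 _
    have hq1 : ∑ z, q z = 1 := by rw [hq]; rw [← hp1]; exact Equiv.sum_comp e p
    set pA := margA q with hpA
    have hpA0 : ∀ a, 0 ≤ pA a := fun a => Finset.sum_nonneg fun b _ => hq0 _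
    have hpA1 : ∑ a, pA a = 1 := by
      rw [hpA, ← hq1, Fintype.sum_prod_type, Finset.sum_comm]
      rfl
    obtain ⟨w', cvec', hw'0, hw'row, hw'col, hc'0, hc'sum, hw'ham⟩ :=
      ih K' (fun i => instF i.succ) (fun i => instD i.succ) pA hpA0 hpA1
    -- marginal identities
    have hmarg0 : margB q = marg 0 p := by
      funext k
      rw [margB, marg]
      rw [show (∑ x : ∀ i, K i, if x 0 = k then p x else 0)
          = ∑ z : B × A, if (e z) 0 = k then p (e z) else 0 from (Equiv.sum_comp e _).symm]
      rw [Fintype.sum_prod_type]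
      have : ∀ b : B, ∀ a : A, (e (b, a)) 0 = b := by
        intro b a; rw [he]; simp [Fin.consEquiv]
      simp_rw [this]
      have hpull : ∀ b : B, (∑ a : A, if b = k then p (e (b, a)) else 0)
          = if b = k then ∑ a : A, p (e (b, a)) else 0 := by
        intro b; split <;> simp
      rw [Finset.sum_congr rfl fun b _ => hpull b]
      rw [Finset.sum_ite_eq' Finset.univ k (fun b => ∑ a : A, p (e (b, a)))]
      simp only [Finset.mem_univ, if_true]
      rfl
    have hmargsucc : ∀ i : Fin n, marg i pA = marg i.succ p := by
      intro i
      funext k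
      rw [marg, marg]
      rw [show (∑ x : ∀ j, K j, if x i.succ = k then p x else 0)
          = ∑ z : B × A, if (e z) i.succ = k then p (e z) else 0 from (Equiv.sum_comp e _).symm]
      rw [Fintype.sum_prod_type, Finset.sum_comm]
      refine Finset.sum_congr rfl fun a _ => ?_
      have hev : ∀ b : B, (e (b, a)) i.succ = a i := by
        intro b; rw [he]; simp [Fin.consEquiv]
      simp_rw [hev]
      split
      · rfl
      · exact Finset.sum_const_zero.symm
    have hentq : entOf q = entOf p := by
      rw [entOf, entOf]
      exact Equiv.sum_comp e (fun x => Real.negMulLog (p x))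
    -- apply the step lemma
    obtain ⟨W, hW0, hWrow, hWcol, hWproj, hInn, hWoff⟩ :=
      step q hq0 hq1 w' hw'0 (by intro a; rw [hw'row a])
        (fun a => ∏ i, marg i pA (a i)) hw'col
    set Iq := entOf (margB q) + entOf (margA q) - entOf q with hIq
    refine ⟨fun z => W (e.symm z.1, e.symm z.2), Fin.cons Iq cvec', ?_, ?_, ?_, ?_, ?_, ?_⟩
    · intro z; exact hW0 _
    · intro x
      rw [show (∑ y, W (e.symm x, e.symm y)) = ∑ z', W (e.symm x, z') from ?_]
      · rw [hWrow (e.symm x), hq]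
        dsimp only
        rw [Equiv.apply_symm_apply]
      · exact Equiv.sum_comp e.symm (fun z' => W (e.symm x, z'))
    · intro y
      rw [show (∑ x, W (e.symm x, e.symm y)) = ∑ z, W (z, e.symm y) from
        Equiv.sum_comp e.symm (fun z => W (z, e.symm y))]
      rw [hWcol (e.symm y)]
      rw [Fin.prod_univ_succ]
      have hy : y = e (e.symm y) := (Equiv.apply_symm_apply e y).symm
      have h0 : (e.symm y).1 = y 0 := by
        conv_rhs => rw [hy]
        rw [he]; simp [Fin.consEquiv]
      have hsucc : ∀ i : Fin n, (e.symm y).2 i = y i.succ := by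
        intro i
        conv_rhs => rw [hy]
        rw [he]; simp [Fin.consEquiv]
      rw [hmarg0, h0]
      congr 1
      refine Finset.prod_congr rfl fun i _ => ?_
      rw [hmargsucc i, hsucc i]
    · intro i
      refine Fin.cases ?_ ?_ i
      · rw [Fin.cons_zero]; exact hInn
      · intro j; rw [Fin.cons_succ]; exact hc'0 j
    · rw [Fin.sum_univ_succ, Fin.cons_zero]
      simp_rw [Fin.cons_succ]
      rw [hc'sum, hIq, hentq, hmarg0]
      rw [show (∑ i : Fin (n+1), entOf (marg i p)) = entOf (marg 0 p)
          + ∑ i : Fin n, entOf (marg i.succ p) from Fin.sum_univ_succ _]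
      rw [show (∑ i : Fin n, entOf (marg i pA)) = ∑ i : Fin n, entOf (marg i.succ p) from
        Finset.sum_congr rfl fun i _ => by rw [hmargsucc i]]
      have : entOf (margA q) = entOf pA := rfl
      rw [this]
      ring
    · -- hamming bound
      rw [Fin.sum_univ_succ, Fin.cons_zero]
      simp_rw [Fin.cons_succ]
      -- reindex by the equivalence on both coordinates
      have hre : (∑ z : (∀ i, K i) × (∀ i, K i),
          W (e.symm z.1, e.symm z.2) * (∑ i, if z.1 i = z.2 i then (0:ℝ) else 1))
          = ∑ z : (B × A) × (B × A),
            W z * (∑ i, if (e z.1) i = (e z.2) i then (0:ℝ) else 1) := by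
        rw [← Equiv.sum_comp (Equiv.prodCongr e e)
          (fun z : (∀ i, K i) × (∀ i, K i) =>
            W (e.symm z.1, e.symm z.2) * (∑ i, if z.1 i = z.2 i then (0:ℝ) else 1))]
        refine Finset.sum_congr rfl fun z _ => ?_
        simp [Equiv.prodCongr]
        left; rfl
      rw [hre]
      have hham : ∀ z : (B × A) × (B × A),
          (∑ i, if (e z.1) i = (e z.2) i then (0:ℝ) else 1)
          = (if z.1.1 = z.2.1 then (0:ℝ) else 1)
            + ∑ i : Fin n, (if z.1.2 i = z.2.2 i then (0:ℝ) else 1) := by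
        rintro ⟨⟨b1, a1⟩, ⟨b2, a2⟩⟩
        rw [he]
        simp only [Fin.consEquiv, Equiv.coe_fn_mk, Fin.sum_univ_succ, Fin.cons_zero,
          Fin.cons_succ]
      rw [Finset.sum_congr rfl fun z _ => by rw [hham z, mul_add]]
      rw [Finset.sum_add_distrib]
      have hpiece1 : (∑ z : (B × A) × (B × A),
          W z * (if z.1.1 = z.2.1 then (0:ℝ) else 1)) ≤ Real.sqrt (Iq / 2) := by
        refine le_trans (le_of_eq ?_) hWoff
        refine Finset.sum_congr rfl fun z _ => ?_
        split <;> simp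
      have hpiece2 : (∑ z : (B × A) × (B × A),
          W z * (∑ i : Fin n, if z.1.2 i = z.2.2 i then (0:ℝ) else 1))
          ≤ ∑ i : Fin n, Real.sqrt (cvec' i / 2) := by
        refine le_trans (le_of_eq ?_) hw'ham
        -- reindex the four-fold sum
        set g : (B × A) × (B × A) → ℝ :=
          fun z => W z * (∑ i : Fin n, if z.1.2 i = z.2.2 i then (0:ℝ) else 1) with hg
        set E4 : ((A × A) × (B × B)) ≃ ((B × A) × (B × A)) :=
          { toFun := fun t => ((t.2.1, t.1.1), (t.2.2, t.1.2)),
            invFun := fun z => ((z.1.2, z.2.2), (z.1.1, z.2.1)),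
            left_inv := by rintro ⟨⟨a, a'⟩, ⟨b, b'⟩⟩; rfl,
            right_inv := by rintro ⟨⟨b, a⟩, ⟨b', a'⟩⟩; rfl } with hE4
        rw [show (∑ z : (B × A) × (B × A), g z) = ∑ t : (A × A) × (B × B), g (E4 t) from
          (Equiv.sum_comp E4 g).symm]
        rw [Fintype.sum_prod_type]
        refine Finset.sum_congr rfl fun za _ => ?_
        rw [hg, hE4]
        dsimp only [Equiv.coe_fn_mk]
        have hinner : ∀ y : B × B,
            W ((y.1, za.1), (y.2, za.2)) * (∑ i : Fin n, if za.1 i = za.2 i then (0:ℝ) else 1)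
            = W ((y.1, za.1), (y.2, za.2)) * (∑ i : Fin n, if za.1 i = za.2 i then (0:ℝ) else 1) :=
          fun y => rfl
        rw [(Finset.sum_mul (Finset.univ : Finset (B × B)) (fun y => W ((y.1, za.1), (y.2, za.2)))
          (∑ i : Fin n, if za.1 i = za.2 i then (0:ℝ) else 1)).symm]
        rw [show (∑ y : B × B, W ((y.1, za.1), (y.2, za.2)))
            = ∑ b : B, ∑ b' : B, W ((b, za.1), (b', za.2)) from Fintype.sum_prod_type _]
        rw [hWproj za.1 za.2]
      calc (∑ z : (B × A) × (B × A), W z * (if z.1.1 = z.2.1 then (0:ℝ) else 1))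
            + ∑ z : (B × A) × (B × A),
              W z * (∑ i : Fin n, if z.1.2 i = z.2.2 i then (0:ℝ) else 1)
          ≤ Real.sqrt (Iq / 2) + ∑ i : Fin n, Real.sqrt (cvec' i / 2) :=
            add_le_add hpiece1 hpiece2


/-- measure of a finite set as sum of singletons -/
lemma measure_finset_eq_sum {α : Type*} [MeasurableSpace α] [MeasurableSingletonClass α]
    (μ : Measure α) (s : Finset α) : μ ↑s = ∑ x ∈ s, μ {x} := by
  rw [show (↑s : Set α) = ⋃ x ∈ s, {x} by ext; simp]
  rw [measure_biUnion_finset]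
  · intro x _ y _ hxy
    simp [Function.onFun, Set.disjoint_singleton, hxy]
  · intro b _; exact measurableSet_singleton b

/-- For a probability measure `μ` on a finite product `∏ᵢ Kᵢ` equipped
with the normalized Hamming metric, there is a coupling `λ` of `μ` and the product
`μ₁ × ⋯ × μₙ` of its marginals with `∫ d_n dλ ≤ √(TC(μ) / (2n))`. -/
theorem marton_tc {n : ℕ} {K : Fin n → Type*} [∀ i, Fintype (K i)] [∀ i, Nonempty (K i)]
    [∀ i, DecidableEq (K i)]
    [∀ i, MeasurableSpace (K i)] [∀ i, MeasurableSingletonClass (K i)]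
    (μ : Measure (∀ i, K i)) [IsProbabilityMeasure μ]
    (μm : ∀ i, Measure (K i)) [∀ i, IsProbabilityMeasure (μm i)]
    (hμm : ∀ i, μm i = μ.map fun x => x i) :
    ∃ lam : Measure ((∀ i, K i) × (∀ i, K i)),
      IsProbabilityMeasure lam ∧
      lam.map Prod.fst = μ ∧
      lam.map Prod.snd = Measure.pi μm ∧
      ∫ p, hammingDist p.1 p.2 ∂lam ≤ Real.sqrt (TC μ (fun i x => x i) / (2 * n)) := by
  classical
  set S := ∀ i, K i with hS
  set p : S → ℝ := fun x => (μ {x}).toReal with hp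
  have hp0 : ∀ x, 0 ≤ p x := fun x => ENNReal.toReal_nonneg
  have hμfin : ∀ s : Set S, μ s ≠ ⊤ := fun s => measure_ne_top μ s
  have hp1 : ∑ x, p x = 1 := by
    have h1 : ∑ x, μ {x} = 1 := by
      rw [show (Finset.univ : Finset S) = (Finset.univ : Finset S) from rfl]
      rw [← measure_finset_eq_sum μ Finset.univ]
      simp [measure_univ]
    have := congrArg ENNReal.toReal h1
    rw [ENNReal.toReal_sum (fun x _ => hμfin {x})] at this
    simpa using this
  obtain ⟨w, cvec, hw0, hwrow, hwcol, hc0, hcsum, hwham⟩ :=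
    core n K (fun i => inferInstance) (fun i => inferInstance) p hp0 hp1
  -- marginal identification
  have hmarg : ∀ (i : Fin n) (k : K i), (μm i) {k} = ENNReal.ofReal (marg i p k) := by
    intro i k
    rw [hμm i, Measure.map_apply (measurable_pi_apply i) (measurableSet_singleton k)]
    have hset : ((fun x : S => x i) ⁻¹' {k})
        = ↑(Finset.univ.filter fun x : S => x i = k) := by
      ext x; simp
    rw [hset, measure_finset_eq_sum μ]
    rw [marg]
    rw [Finset.sum_filter]
    rw [ENNReal.ofReal_sum_of_nonneg (fun x _ => by split <;> simp [hp0])]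
    refine Finset.sum_congr rfl fun x _ => ?_
    split
    · rw [hp, ENNReal.ofReal_toReal (hμfin {x})]
    · simp
  -- total sum of w
  have hwtot : ∑ z : S × S, w z = 1 := by
    rw [Fintype.sum_prod_type]
    rw [Finset.sum_congr rfl fun x _ => hwrow x]
    exact hp1
  -- build the coupling measure
  set Wf : S × S → ENNReal := fun z => ENNReal.ofReal (w z) with hWf
  have hWf1 : ∑ z, Wf z = 1 := by
    rw [hWf, ← ENNReal.ofReal_sum_of_nonneg (fun z _ => hw0 z), hwtot]
    simp
  set pmf : PMF (S × S) := PMF.ofFintype Wf hWf1 with hpmf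
  set lam : Measure (S × S) := pmf.toMeasure with hlam
  haveI : IsProbabilityMeasure lam := PMF.toMeasure.isProbabilityMeasure pmf
  have hlam_singleton : ∀ z : S × S, lam {z} = ENNReal.ofReal (w z) := by
    intro z
    rw [hlam, PMF.toMeasure_apply_singleton pmf z (measurableSet_singleton z)]
    rw [hpmf, PMF.ofFintype_apply]
  haveI : ∀ i, SigmaFinite (μm i) := fun i => inferInstance
  refine ⟨lam, inferInstance, ?_, ?_, ?_⟩
  · -- first marginal
    rw [Measure.ext_iff_singleton]
    intro x
    rw [Measure.map_apply measurable_fst (measurableSet_singleton x)]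
    have hset : (Prod.fst ⁻¹' {x} : Set (S × S))
        = ↑(({x} : Finset S) ×ˢ (Finset.univ : Finset S)) := by
      ext z; simp [Prod.ext_iff]
      tauto
    rw [hset, measure_finset_eq_sum lam]
    rw [Finset.sum_product]
    rw [Finset.sum_singleton]
    rw [Finset.sum_congr rfl fun y _ => hlam_singleton (x, y)]
    rw [← ENNReal.ofReal_sum_of_nonneg (fun y _ => hw0 (x, y))]
    rw [hwrow x, hp]
    exact ENNReal.ofReal_toReal (hμfin {x})
  · -- second marginal
    rw [Measure.ext_iff_singleton]
    intro y
    rw [Measure.map_apply measurable_snd (measurableSet_singleton y)]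
    have hset : (Prod.snd ⁻¹' {y} : Set (S × S))
        = ↑((Finset.univ : Finset S) ×ˢ ({y} : Finset S)) := by
      ext z; simp [Prod.ext_iff]
      tauto
    rw [hset, measure_finset_eq_sum lam]
    rw [Finset.sum_product]
    simp only [Finset.sum_singleton]
    rw [Finset.sum_congr rfl fun x _ => hlam_singleton (x, y)]
    rw [← ENNReal.ofReal_sum_of_nonneg (fun x _ => hw0 (x, y))]
    rw [hwcol y]
    rw [show ({y} : Set S) = Set.univ.pi (fun i => {y i}) from (Set.univ_pi_singleton y).symm]
    rw [Measure.pi_pi]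
    rw [Finset.prod_congr rfl fun i _ => hmarg i (y i)]
    rw [← ENNReal.ofReal_prod_of_nonneg (fun i _ => ?_)]
    · refine Finset.sum_nonneg fun x _ => ?_
      split <;> simp [hp0]
  · -- the inequality
    have hint : ∫ z, hammingDist z.1 z.2 ∂lam
        = ∑ z : S × S, w z * hammingDist z.1 z.2 := by
      rw [integral_fintype (Integrable.of_finite)]
      simp only [Measure.real]
      refine Finset.sum_congr rfl fun z _ => ?_
      rw [hlam_singleton z, ENNReal.toReal_ofReal (hw0 z)]
      rfl
    have hham_eq : ∀ z : S × S, hammingDist z.1 z.2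
        = (∑ i, if z.1 i = z.2 i then (0:ℝ) else 1) / n := by
      intro z
      rw [hammingDist]
      congr 1
      rw [Finset.card_filter]
      rw [Nat.cast_sum]
      refine Finset.sum_congr rfl fun i _ => ?_
      by_cases h : z.1 i = z.2 i <;> simp [h]
    -- TC identification
    have hTC : TC μ (fun i x => x i) = ∑ i, cvec i := by
      rw [hcsum, TC]
      have h1 : ∀ i, shEnt μ (fun x : S => x i) = entOf (marg i p) := by
        intro i
        rw [shEnt, entOf]
        refine Finset.sum_congr rfl fun k _ => ?_
        congr 1
        have hset : ((fun x : S => x i) ⁻¹' {k})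
            = ↑(Finset.univ.filter fun x : S => x i = k) := by
          ext x; simp
        rw [hset, measure_finset_eq_sum μ]
        rw [ENNReal.toReal_sum (fun x _ => hμfin {x})]
        rw [marg, Finset.sum_filter]
      have h2 : shEnt μ (joint fun i (x : S) => x i) = entOf p := rfl
      rw [h2, Finset.sum_congr rfl fun i _ => h1 i]
    -- final computation
    rw [hint, hTC]
    rw [Finset.sum_congr rfl fun z _ => by rw [hham_eq z]]
    rcases Nat.eq_zero_or_pos n with hn | hn
    · subst hn
      simp
    have hnR : (0:ℝ) < n := by exact_mod_cast hn
    have hstep : ∑ z : S × S, w z * ((∑ i, if z.1 i = z.2 i then (0:ℝ) else 1) / n)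
        = (∑ z : S × S, w z * (∑ i, if z.1 i = z.2 i then (0:ℝ) else 1)) / n := by
      rw [Finset.sum_div]
      exact Finset.sum_congr rfl fun z _ => by ring
    rw [hstep]
    have hTC0 : 0 ≤ ∑ i, cvec i := Finset.sum_nonneg fun i _ => hc0 i
    have hcs : (∑ i, Real.sqrt (cvec i / 2))^2 ≤ n * ((∑ i, cvec i) / 2) := by
      have := Finset.sum_sq_le_sum_mul_sum_of_sq_eq_mul (Finset.univ : Finset (Fin n))
        (r := fun i => Real.sqrt (cvec i / 2)) (f := fun _ => (1:ℝ))
        (g := fun i => cvec i / 2)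
        (fun i _ => by norm_num)
        (fun i _ => by linarith [hc0 i])
        (fun i _ => by rw [Real.sq_sqrt (by linarith [hc0 i])]; ring)
      simp only [Finset.sum_const, Finset.card_univ, Fintype.card_fin, nsmul_eq_mul,
        mul_one] at this
      rw [Finset.sum_div]
      calc (∑ i, Real.sqrt (cvec i / 2))^2 ≤ (n:ℝ) * ∑ i, cvec i / 2 := this
        _ = (n:ℝ) * ∑ i, cvec i / 2 := rfl
    have hsq : ∑ i, Real.sqrt (cvec i / 2) ≤ Real.sqrt (n * ((∑ i, cvec i) / 2)) := by
      refine (Real.le_sqrt (Finset.sum_nonneg fun i _ => Real.sqrt_nonneg _)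
        (by positivity)).2 hcs
    have hfinal : Real.sqrt (n * ((∑ i, cvec i) / 2)) / n
        = Real.sqrt ((∑ i, cvec i) / (2 * n)) := by
      rw [show ((∑ i, cvec i) / (2 * n)) = (n * ((∑ i, cvec i) / 2)) / (n:ℝ)^2 by
        field_simp]
      rw [Real.sqrt_div (by positivity)]
      rw [Real.sqrt_sq (le_of_lt hnR)]
    rw [← hfinal]
    have hnum : (∑ z : S × S, w z * (∑ i, if z.1 i = z.2 i then (0:ℝ) else 1))
        ≤ Real.sqrt (n * ((∑ i, cvec i) / 2)) := le_trans hwham hsq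
    exact (div_le_div_iff_of_pos_right hnR).2 hnum


end Corr
end
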